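/- arXiv:2406.07206 — 4 statements merged into one kernel-verified Lean document; each statement's English description precedes it below -/
import Mathlib

section
/- For j ≥ 0 with j ≠ 3, the Riemann sum ζ^n_{s,j} := n^{j-3} · Σ_{k ∈ ℤ³\{0}, n ≤ |k| ≤ 2n} 1/|k|^j converges as n → ∞ to ζ_{s,j} := 4π(2^{3-j} − 1)/(3 − j), with error of order O(n^{-1}); i.e. there is a constant C > 0 such that |ζ^n_{s,j} − ζ_{s,j}| ≤ C/n for all n ≥ 1. -/
open scoped BigOperators Classical
open MeasureTheory Metric Set

/-- Euclidean norm of an integer lattice point in `ℤ³`. -/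
noncomputable def nrm3 (k : Fin 3 → ℤ) : ℝ :=
  Real.sqrt (((k 0 : ℝ)) ^ 2 + ((k 1 : ℝ)) ^ 2 + ((k 2 : ℝ)) ^ 2)

/-- The Riemann sum `ζ^n_{s,j} = n^{j-3} Σ_{k ∈ ℤ³\{0}, n ≤ |k| ≤ 2n} |k|^{-j}`. -/
noncomputable def zetaS (n : ℕ) (j : ℝ) : ℝ :=
  (n : ℝ) ^ (j - 3) *
    ∑' k : Fin 3 → ℤ,
      if k ≠ 0 ∧ (n : ℝ) ≤ nrm3 k ∧ nrm3 k ≤ 2 * n then nrm3 k ^ (-j) else 0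

namespace RS

abbrev E3 := EuclideanSpace ℝ (Fin 3)

noncomputable def emb (k : Fin 3 → ℤ) : E3 := WithLp.toLp 2 (fun i => (k i : ℝ))

lemma nrm3_eq (k : Fin 3 → ℤ) : nrm3 k = ‖emb k‖ := by
  rw [EuclideanSpace.norm_eq]
  simp [nrm3, Fin.sum_univ_three, emb, sq_abs]

/-- the half-open unit cube centered at the lattice point k -/
def cube (k : Fin 3 → ℤ) : Set E3 :=
  {x : E3 | ∀ i, (k i : ℝ) - 2⁻¹ ≤ x i ∧ x i < (k i : ℝ) + 2⁻¹}

lemma cube_eq (k : Fin 3 → ℤ) :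
    cube k = (MeasurableEquiv.toLp 2 (Fin 3 → ℝ)).symm ⁻¹'
      (Set.univ.pi fun i => Set.Ico ((k i : ℝ) - 2⁻¹) ((k i : ℝ) + 2⁻¹)) := by
  ext x
  simp [cube, Set.mem_pi, and_comm, MeasurableEquiv.toLp_symm_apply]

lemma volume_cube (k : Fin 3 → ℤ) : volume (cube k) = 1 := by
  rw [cube_eq, (EuclideanSpace.volume_preserving_symm_measurableEquiv_toLp (Fin 3)).measure_preimage
    (MeasurableSet.univ_pi fun i => measurableSet_Ico).nullMeasurableSet]
  rw [MeasureTheory.volume_pi_pi]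
  simp [Real.volume_Ico]
  norm_num

lemma measurableSet_cube (k : Fin 3 → ℤ) : MeasurableSet (cube k) := by
  rw [cube_eq]
  exact (MeasurableEquiv.toLp 2 (Fin 3 → ℝ)).symm.measurable
    (MeasurableSet.univ_pi fun i => measurableSet_Ico)


lemma cube_disjoint {k l : Fin 3 → ℤ} (h : k ≠ l) : Disjoint (cube k) (cube l) := by
  rw [Set.disjoint_left]
  rintro x hk hl
  apply h
  funext i
  have h1 := hk i; have h2 := hl i
  have : |(k i : ℝ) - l i| < 1 := by
    rw [abs_sub_lt_iff]; constructor <;> linarith [h1.1, h1.2, h2.1, h2.2]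
  have hint : |k i - l i| < 1 := by
    have : |((k i - l i : ℤ) : ℝ)| < 1 := by push_cast; exact this
    exact_mod_cast this
  rwa [Int.abs_lt_one_iff, sub_eq_zero] at hint

/-- rounding -/
noncomputable def rnd (x : E3) : Fin 3 → ℤ := fun i => ⌊x i + 2⁻¹⌋

lemma mem_cube_rnd (x : E3) : x ∈ cube (rnd x) := by
  intro i
  have h1 := Int.floor_le (x i + 2⁻¹)
  have h2 := Int.lt_floor_add_one (x i + 2⁻¹)
  constructor <;> [skip; skip] <;> simp only [rnd] <;> linarith

lemma norm_sub_le_of_mem_cube {x : E3} {k : Fin 3 → ℤ} (h : x ∈ cube k) :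
    ‖x - emb k‖ ≤ 1 := by
  have hb : ∀ i, |x i - (k i : ℝ)| ≤ 2⁻¹ := by
    intro i
    have := h i
    rw [abs_le]; constructor <;> linarith [this.1, this.2]
  rw [EuclideanSpace.norm_eq]
  have : ∑ i, ‖(x - emb k) i‖ ^ 2 ≤ 3 * (2⁻¹:ℝ)^2 := by
    rw [Fin.sum_univ_three]
    have e : ∀ i, ‖(x - emb k) i‖ = |x i - (k i : ℝ)| := fun i => rfl
    rw [e 0, e 1, e 2]
    have sq : ∀ i, |x i - (k i:ℝ)| ^2 ≤ (2⁻¹:ℝ)^2 := fun i =>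
      pow_le_pow_left₀ (abs_nonneg _) (hb i) 2
    linarith [sq 0, sq 1, sq 2]
  calc Real.sqrt (∑ i, ‖(x - emb k) i‖ ^ 2) ≤ Real.sqrt (3 * (2⁻¹:ℝ)^2) :=
        Real.sqrt_le_sqrt this
    _ ≤ 1 := by
        rw [show (3 * (2⁻¹:ℝ)^2) = 3/4 by norm_num]
        rw [show (1:ℝ) = Real.sqrt 1 by simp]
        exact Real.sqrt_le_sqrt (by norm_num)

lemma abs_norm_sub_nrm3 {x : E3} {k : Fin 3 → ℤ} (h : x ∈ cube k) :
    |‖x‖ - ‖emb k‖| ≤ 1 :=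
  (abs_norm_sub_norm_le x (emb k)).trans (norm_sub_le_of_mem_cube h)


lemma volume_ball_one : (volume (ball (0:E3) 1)).toReal = 4 / 3 * Real.pi := by
  rw [EuclideanSpace.volume_ball]
  have hcard : (Fintype.card (Fin 3)) = 3 := by simp
  rw [hcard]
  have hG : Real.Gamma ((3:ℕ) / 2 + 1) = 3 / 4 * Real.sqrt Real.pi := by
    push_cast
    rw [Real.Gamma_add_one (by norm_num)]
    have : (3:ℝ)/2 = 1/2 + 1 := by norm_num
    rw [this, Real.Gamma_add_one (by norm_num), Real.Gamma_one_half_eq]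
    ring
  rw [hG]
  have hs : Real.sqrt Real.pi ^ 3 = Real.pi * Real.sqrt Real.pi := by
    have : Real.sqrt Real.pi ^ 3 = Real.sqrt Real.pi ^ 2 * Real.sqrt Real.pi := by ring
    rw [this, Real.sq_sqrt Real.pi_nonneg]
  rw [hs]
  have hsp : Real.sqrt Real.pi ≠ 0 := by
    positivity
  rw [ENNReal.toReal_mul]
  rw [ENNReal.toReal_ofReal (by positivity)]
  simp only [ENNReal.one_rpow, ENNReal.toReal_pow, ENNReal.toReal_ofReal (by norm_num : (0:ℝ) ≤ 1)]
  field_simp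

/-- annulus -/
def ann (a b : ℝ) : Set E3 := {x : E3 | a ≤ ‖x‖ ∧ ‖x‖ ≤ b}

lemma ann_eq (a b : ℝ) : ann a b = (fun x : E3 => ‖x‖) ⁻¹' (Icc a b) := rfl

lemma measurableSet_ann (a b : ℝ) : MeasurableSet (ann a b) :=
  (measurable_norm) measurableSet_Icc

lemma isCompact_ann {a b : ℝ} (ha : 0 < a) : IsCompact (ann a b) := by
  have : ann a b = closedBall (0:E3) b \ ball (0:E3) a := by
    ext x
    simp [ann, mem_closedBall, mem_ball, dist_zero_right, not_lt, and_comm]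
  rw [this]
  exact (isCompact_closedBall _ _).diff isOpen_ball

lemma integral_ann {a b : ℝ} (ha : 0 < a) (hab : a ≤ b) (g : ℝ → ℝ) :
    ∫ x in ann a b, g ‖x‖ = 4 * Real.pi * ∫ r in a..b, r ^ 2 * g r := by
  have key := MeasureTheory.integral_fun_norm_addHaar (volume : Measure E3)
    ((Icc a b).indicator g)
  have hdim : Module.finrank ℝ E3 = 3 := by simp [finrank_euclideanSpace]
  rw [hdim] at key
  -- LHS of key equals our set integral
  have lhs : (∫ x : E3, (Icc a b).indicator g ‖x‖) = ∫ x in ann a b, g ‖x‖ := by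
    rw [← MeasureTheory.integral_indicator (measurableSet_ann a b)]
    have e : (fun x : E3 => (Icc a b).indicator g ‖x‖)
        = (ann a b).indicator (fun x : E3 => g ‖x‖) := by
      funext x
      by_cases h : ‖x‖ ∈ Icc a b
      · rw [Set.indicator_of_mem h, Set.indicator_of_mem (show x ∈ ann a b from h)]
      · rw [Set.indicator_of_notMem h, Set.indicator_of_notMem (show x ∉ ann a b from h)]
    exact congrArg _ e
  rw [lhs] at key
  rw [key]
  have : (∫ y in Ioi (0:ℝ), y ^ (3-1) • (Icc a b).indicator g y)
      = ∫ r in a..b, r ^ 2 * g r := by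
    have e1 : ∀ y : ℝ, y ^ (3-1) • (Icc a b).indicator g y
        = (Icc a b).indicator (fun r => r ^ 2 * g r) y := by
      intro y
      by_cases h : y ∈ Icc a b
      · rw [Set.indicator_of_mem h, Set.indicator_of_mem h, smul_eq_mul]
      · rw [Set.indicator_of_notMem h, Set.indicator_of_notMem h, smul_zero]
    simp_rw [e1]
    rw [MeasureTheory.setIntegral_indicator measurableSet_Icc]
    have : Ioi (0:ℝ) ∩ Icc a b = Icc a b :=
      Set.inter_eq_right.mpr (fun x hx => lt_of_lt_of_le ha hx.1)
    rw [this, MeasureTheory.integral_Icc_eq_integral_Ioc,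
      ← intervalIntegral.integral_of_le hab]
  rw [this, measureReal_def, volume_ball_one, nsmul_eq_mul, smul_eq_mul]
  push_cast
  ring

/-! ### The shell sum -/

def P (n : ℕ) (k : Fin 3 → ℤ) : Prop := k ≠ 0 ∧ (n:ℝ) ≤ nrm3 k ∧ nrm3 k ≤ 2*n

noncomputable def shell (n : ℕ) : Finset (Fin 3 → ℤ) :=
  (Fintype.piFinset fun _ : Fin 3 => Finset.Icc (-(2*(n:ℤ))) (2*n)).filter (P n)

lemma nrm3_nonneg (k : Fin 3 → ℤ) : 0 ≤ nrm3 k := Real.sqrt_nonneg _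

lemma nrm3_sq (k : Fin 3 → ℤ) :
    nrm3 k ^ 2 = ((k 0:ℝ))^2 + ((k 1:ℝ))^2 + ((k 2:ℝ))^2 := by
  rw [nrm3, Real.sq_sqrt] <;> positivity

lemma mem_piFinset_of_P {n : ℕ} {k : Fin 3 → ℤ} (h : P n k) :
    k ∈ (Fintype.piFinset fun _ : Fin 3 => Finset.Icc (-(2*(n:ℤ))) (2*n)) := by
  rw [Fintype.mem_piFinset]
  intro i
  rw [Finset.mem_Icc]
  have hsq : ((k i : ℝ))^2 ≤ (2*n)^2 := by
    have h2 : nrm3 k ^ 2 ≤ (2*(n:ℝ))^2 := by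
      have := h.2.2
      nlinarith [nrm3_nonneg k]
    rw [nrm3_sq] at h2
    have h3 : i = 0 ∨ i = 1 ∨ i = 2 := by omega
    rcases h3 with h3 | h3 | h3 <;> subst h3 <;>
      nlinarith [sq_nonneg ((k 0:ℝ)), sq_nonneg ((k 1:ℝ)), sq_nonneg ((k 2:ℝ))]
  have habs : |(k i : ℝ)| ≤ 2*n := by
    have := Real.sqrt_le_sqrt hsq
    rwa [Real.sqrt_sq_eq_abs, Real.sqrt_sq (by positivity)] at this
  have : |((k i : ℤ) : ℝ)| ≤ ((2*n : ℤ) : ℝ) := by push_cast; exact habs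
  have : |k i| ≤ 2*(n:ℤ) := by exact_mod_cast this
  constructor <;> [linarith [neg_abs_le (k i)]; linarith [le_abs_self (k i)]]

lemma tsum_eq_shell (n : ℕ) (j : ℝ) :
    (∑' k : Fin 3 → ℤ, if P n k then nrm3 k ^ (-j) else 0)
      = ∑ k ∈ shell n, nrm3 k ^ (-j) := by
  rw [tsum_eq_sum (s := Fintype.piFinset fun _ : Fin 3 => Finset.Icc (-(2*(n:ℤ))) (2*n))
    (by intro k hk
        rw [if_neg]
        exact fun h => hk (mem_piFinset_of_P h)),
    shell, ← Finset.sum_filter]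

/-! ### Geometric bounds for cubes of shell points -/

lemma cube_subset_ann {n : ℕ} {k : Fin 3 → ℤ} (hk : k ∈ shell n) :
    cube k ⊆ ann ((n:ℝ) - 1) (2*n + 1) := by
  intro x hx
  have hP : P n k := (Finset.mem_filter.1 hk).2
  have h1 := abs_norm_sub_nrm3 hx
  rw [← nrm3_eq] at h1
  rw [abs_le] at h1
  exact ⟨by linarith [hP.2.1, h1.2], by linarith [hP.2.2, h1.1]⟩

lemma ann_subset_cubes {n : ℕ} (hn : 1 ≤ n) :
    ann ((n:ℝ) + 1) (2*n - 1) ⊆ ⋃ k ∈ shell n, cube k := by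
  intro x hx
  have hmem := mem_cube_rnd x
  have h1 := abs_norm_sub_nrm3 hmem
  rw [← nrm3_eq, abs_le] at h1
  have hn1 : (1:ℝ) ≤ n := by exact_mod_cast hn
  have hP : P n (rnd x) := by
    refine ⟨?_, by linarith [hx.1, h1.1], by linarith [hx.2, h1.2]⟩
    intro h0
    have : nrm3 (rnd x) = 0 := by rw [h0]; simp [nrm3]
    have : (n:ℝ) + 1 - 1 ≤ (0:ℝ) := by
      rw [← this]; linarith [hx.1, h1.1]
    linarith
  exact Set.mem_biUnion (Finset.mem_filter.2 ⟨mem_piFinset_of_P hP, hP⟩) hmem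


/-! ### Sandwich -/

lemma integrableOn_g {a b c j : ℝ} (ha : 0 < a) (hac : 0 < a + c) :
    IntegrableOn (fun x : E3 => (‖x‖ + c) ^ (-j)) (ann a b) volume := by
  apply ContinuousOn.integrableOn_compact (isCompact_ann ha)
  apply ContinuousOn.rpow_const ((continuous_norm.add continuous_const).continuousOn)
  intro x hx
  left
  have : a + c ≤ ‖x‖ + c := by linarith [hx.1]
  exact ne_of_gt (lt_of_lt_of_le hac this)


lemma shell_sum_le {n : ℕ} (hn : 4 ≤ n) {j : ℝ} (hj : 0 ≤ j) :
    ∑ k ∈ shell n, nrm3 k ^ (-j)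
      ≤ ∫ x in ann ((n:ℝ) - 1) (2*n + 1), (‖x‖ - 1) ^ (-j) := by
  have hn4 : (4:ℝ) ≤ n := by exact_mod_cast hn
  have ha : (0:ℝ) < (n:ℝ) - 1 := by linarith
  have hac : (0:ℝ) < ((n:ℝ) - 1) + (-1) := by linarith
  have hInt : IntegrableOn (fun x : E3 => (‖x‖ + (-1)) ^ (-j))
      (ann ((n:ℝ) - 1) (2*n + 1)) volume := integrableOn_g ha hac
  simp_rw [← sub_eq_add_neg] at hInt
  -- pointwise bound on each cube
  have step1 : ∀ k ∈ shell n, nrm3 k ^ (-j) ≤ ∫ x in cube k, (‖x‖ - 1) ^ (-j) := by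
    intro k hk
    have hsub := cube_subset_ann hk
    have hIntk : IntegrableOn (fun x : E3 => (‖x‖ - 1) ^ (-j)) (cube k) volume :=
      hInt.mono_set hsub
    have hconst : (nrm3 k ^ (-j)) = ∫ _x in cube k, nrm3 k ^ (-j) := by
      rw [setIntegral_const, measureReal_def, volume_cube]
      simp
    rw [hconst]
    apply setIntegral_mono_on (integrableOn_const (by rw [volume_cube]; simp))
      hIntk (measurableSet_cube k)
    intro x hx
    have h1 := abs_norm_sub_nrm3 hx
    rw [← nrm3_eq, abs_le] at h1
    have hP : P n k := (Finset.mem_filter.1 hk).2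
    have hxpos : (0:ℝ) < ‖x‖ - 1 := by linarith [hP.2.1, h1.2]
    exact Real.rpow_le_rpow_of_nonpos hxpos (by linarith [h1.2]) (neg_nonpos.2 hj)
  -- sum it up
  calc ∑ k ∈ shell n, nrm3 k ^ (-j)
      ≤ ∑ k ∈ shell n, ∫ x in cube k, (‖x‖ - 1) ^ (-j) := Finset.sum_le_sum step1
    _ = ∫ x in (⋃ k ∈ shell n, cube k), (‖x‖ - 1) ^ (-j) := by
        rw [integral_biUnion_finset (shell n) (fun k _ => measurableSet_cube k)
          (fun k _ l _ hkl => cube_disjoint hkl)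
          (fun k hk => hInt.mono_set (cube_subset_ann hk))]
    _ ≤ ∫ x in ann ((n:ℝ) - 1) (2*n + 1), (‖x‖ - 1) ^ (-j) := by
        apply setIntegral_mono_set hInt
        · filter_upwards [ae_restrict_mem (measurableSet_ann _ _)] with x hx
          exact Real.rpow_nonneg (by linarith [hx.1]) _
        · exact HasSubset.Subset.eventuallyLE (Set.iUnion₂_subset fun k hk => cube_subset_ann hk)

lemma le_shell_sum {n : ℕ} (hn : 4 ≤ n) {j : ℝ} (hj : 0 ≤ j) :
    ∫ x in ann ((n:ℝ) + 1) (2*n - 1), (‖x‖ + 1) ^ (-j)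
      ≤ ∑ k ∈ shell n, nrm3 k ^ (-j) := by
  have hn4 : (4:ℝ) ≤ n := by exact_mod_cast hn
  have ha : (0:ℝ) < (n:ℝ) + 1 := by linarith
  have hInt : IntegrableOn (fun x : E3 => (‖x‖ + 1) ^ (-j))
      (ann ((n:ℝ) + 1) (2*n - 1)) volume := integrableOn_g ha (by linarith)
  have hcov := ann_subset_cubes (show 1 ≤ n by omega)
  have hdecomp : ann ((n:ℝ) + 1) (2*n - 1)
      = ⋃ k ∈ shell n, (cube k ∩ ann ((n:ℝ) + 1) (2*n - 1)) := by
    ext x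
    constructor
    · intro hx
      obtain ⟨s, ⟨k, rfl⟩, hs⟩ := hcov hx
      simp only [Set.mem_iUnion] at hs ⊢
      obtain ⟨hk, hxk⟩ := hs
      exact ⟨k, hk, hxk, hx⟩
    · intro hx
      simp only [Set.mem_iUnion] at hx
      obtain ⟨k, hk, _, hx2⟩ := hx
      exact hx2
  calc ∫ x in ann ((n:ℝ) + 1) (2*n - 1), (‖x‖ + 1) ^ (-j)
      = ∑ k ∈ shell n, ∫ x in cube k ∩ ann ((n:ℝ) + 1) (2*n - 1), (‖x‖ + 1) ^ (-j) := by
        conv_lhs => rw [hdecomp]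
        rw [integral_biUnion_finset (shell n)
          (fun k _ => (measurableSet_cube k).inter (measurableSet_ann _ _))
          (fun k _ l _ hkl => ((cube_disjoint hkl).mono Set.inter_subset_left
            Set.inter_subset_left))
          (fun k hk => hInt.mono_set Set.inter_subset_right)]
    _ ≤ ∑ k ∈ shell n, nrm3 k ^ (-j) := by
        apply Finset.sum_le_sum
        intro k hk
        have hP : P n k := (Finset.mem_filter.1 hk).2
        have hle : ∫ x in cube k ∩ ann ((n:ℝ) + 1) (2*n - 1), (‖x‖ + 1) ^ (-j)
            ≤ ∫ _x in cube k ∩ ann ((n:ℝ) + 1) (2*n - 1), nrm3 k ^ (-j) := by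
          apply setIntegral_mono_on (hInt.mono_set Set.inter_subset_right)
            (integrableOn_const (ne_of_lt (lt_of_le_of_lt
              (measure_mono Set.inter_subset_left) (by rw [volume_cube]; exact ENNReal.one_lt_top))))
            ((measurableSet_cube k).inter (measurableSet_ann _ _))
          intro x hx
          have h1 := abs_norm_sub_nrm3 hx.1
          rw [← nrm3_eq, abs_le] at h1
          have hkpos : (0:ℝ) < nrm3 k := lt_of_lt_of_le (by linarith) hP.2.1
          exact Real.rpow_le_rpow_of_nonpos hkpos (by linarith [h1.1]) (neg_nonpos.2 hj)
        refine hle.trans ?_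
        rw [setIntegral_const, smul_eq_mul, measureReal_def]
        have hv : (volume (cube k ∩ ann ((n:ℝ) + 1) (2*n - 1))).toReal ≤ 1 := by
          have : volume (cube k ∩ ann ((n:ℝ) + 1) (2*n - 1)) ≤ volume (cube k) :=
            measure_mono Set.inter_subset_left
          rw [volume_cube] at this
          exact le_trans (ENNReal.toReal_mono (by simp) this) (by simp)
        have hnn : (0:ℝ) ≤ nrm3 k ^ (-j) := Real.rpow_nonneg (nrm3_nonneg k) _
        nlinarith

/-! ### 1D estimates -/

lemma rpow_neg_sub_le {a b j : ℝ} (ha : 0 < a) (hab : a ≤ b) (hj : 0 ≤ j) :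
    |a ^ (-j) - b ^ (-j)| ≤ j * a ^ (-j-1) * (b - a) := by
  have h : ∀ x ∈ Icc a b, HasDerivWithinAt (fun t : ℝ => t ^ (-j))
      ((-j) * x ^ (-j-1)) (Icc a b) x := by
    intro x hx
    have hx0 : x ≠ 0 := ne_of_gt (lt_of_lt_of_le ha hx.1)
    have := (Real.hasDerivAt_rpow_const (p := -j) (Or.inl hx0)).hasDerivWithinAt
      (s := Icc a b)
    simpa [sub_eq_add_neg, add_comm] using this
  have bound : ∀ x ∈ Icc a b, ‖(-j) * x ^ (-j-1)‖ ≤ j * a ^ (-j-1) := by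
    intro x hx
    have hx0 : (0:ℝ) < x := lt_of_lt_of_le ha hx.1
    rw [norm_mul, Real.norm_eq_abs, Real.norm_eq_abs, abs_neg, abs_of_nonneg hj,
      abs_of_nonneg (Real.rpow_nonneg hx0.le _)]
    exact mul_le_mul_of_nonneg_left
      (Real.rpow_le_rpow_of_nonpos ha hx.1 (by linarith)) hj
  have key := (convex_Icc a b).norm_image_sub_le_of_norm_hasDerivWithin_le h bound
    (left_mem_Icc.2 hab) (right_mem_Icc.2 hab)
  rw [Real.norm_eq_abs, Real.norm_eq_abs, abs_of_nonneg (by linarith : (0:ℝ) ≤ b - a)] at key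
  calc |a ^ (-j) - b ^ (-j)| = |b ^ (-j) - a ^ (-j)| := abs_sub_comm _ _
    _ ≤ j * a ^ (-j-1) * (b - a) := key

lemma intervalIntegrable_shift {α β j : ℝ} (c : ℝ) (h : ∀ x ∈ Set.uIcc α β, x + c ≠ 0) :
    IntervalIntegrable (fun r : ℝ => r^2 * (r + c) ^ (-j)) volume α β := by
  apply ContinuousOn.intervalIntegrable
  apply ContinuousOn.mul (by fun_prop)
  exact ContinuousOn.rpow_const (by fun_prop) (fun x hx => Or.inl (h x hx))


lemma prod_bound {c j r s : ℝ} (hc : 0 < c) (hj : 0 ≤ j) (hr : |r| ≤ 3*c) (hs : c/2 ≤ s) :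
    |r^2 * s^(-j)| ≤ 9 * 2^j * c^(2-j) := by
  have hc2 : (0:ℝ) < c/2 := by positivity
  have hs0 : (0:ℝ) < s := lt_of_lt_of_le hc2 hs
  have h1 : |r|^2 ≤ 9 * c^2 := by nlinarith [abs_nonneg r]
  have h2 : s^(-j) ≤ (c/2)^(-j) :=
    Real.rpow_le_rpow_of_nonpos hc2 hs (neg_nonpos.2 hj)
  have h3 : (c/2)^(-j) = 2^j * c^(-j) := by
    rw [Real.div_rpow hc.le (by norm_num), Real.rpow_neg (by norm_num : (0:ℝ) ≤ 2)]
    field_simp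
  rw [abs_mul, abs_of_nonneg (Real.rpow_nonneg hs0.le _), abs_pow, sq_abs]
  calc r^2 * s^(-j) ≤ (9 * c^2) * (2^j * c^(-j)) := by
        rw [← h3]
        apply mul_le_mul (by rwa [sq_abs] at h1) h2 (Real.rpow_nonneg hs0.le _) (by positivity)
    _ = 9 * 2^j * c^(2-j) := by
        rw [show (2:ℝ) - j = 2 + (-j) by ring, Real.rpow_add hc,
          Real.rpow_two]
        ring

lemma prod_diff_bound {c j r s t : ℝ} (hc : 0 < c) (hj : 0 ≤ j) (hr : |r| ≤ 3*c)
    (hs : c/2 ≤ s) (hst : s ≤ t) (hts : t - s ≤ 1) :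
    |r^2 * s^(-j) - r^2 * t^(-j)| ≤ 18 * j * 2^j * c^(1-j) := by
  have hc2 : (0:ℝ) < c/2 := by positivity
  have hs0 : (0:ℝ) < s := lt_of_lt_of_le hc2 hs
  have h1 : |r|^2 ≤ 9 * c^2 := by nlinarith [abs_nonneg r]
  have h2 : |s^(-j) - t^(-j)| ≤ j * s^(-j-1) * (t - s) := rpow_neg_sub_le hs0 hst hj
  have h3 : s^(-j-1) ≤ (c/2)^(-j-1) :=
    Real.rpow_le_rpow_of_nonpos hc2 hs (by linarith)
  have h4 : (c/2)^(-j-1) = 2^(j+1) * c^(-j-1) := by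
    rw [Real.div_rpow hc.le (by norm_num),
      show -j-1 = -(j+1) by ring, Real.rpow_neg (by norm_num : (0:ℝ) ≤ 2)]
    field_simp
  have key : |r^2 * s^(-j) - r^2 * t^(-j)| = |r|^2 * |s^(-j) - t^(-j)| := by
    rw [← mul_sub, abs_mul, abs_pow, sq_abs]
  rw [key]
  have h5 : |s^(-j) - t^(-j)| ≤ j * (2^(j+1) * c^(-j-1)) := by
    calc |s^(-j) - t^(-j)| ≤ j * s^(-j-1) * (t-s) := h2
      _ ≤ j * s^(-j-1) * 1 := by
          apply mul_le_mul_of_nonneg_left hts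
          positivity
      _ = j * s^(-j-1) := mul_one _
      _ ≤ j * (2^(j+1) * c^(-j-1)) :=
          mul_le_mul_of_nonneg_left (h3.trans_eq h4) hj
  calc |r|^2 * |s^(-j) - t^(-j)| ≤ (9 * c^2) * (j * (2^(j+1) * c^(-j-1))) := by
        exact mul_le_mul h1 h5 (abs_nonneg _) (by positivity)
    _ = 18 * j * 2^j * c^(1-j) := by
        rw [show (1:ℝ) - j = 2 + (-j-1) by ring, Real.rpow_add hc, Real.rpow_two,
          Real.rpow_add (by norm_num : (0:ℝ) < 2), Real.rpow_one]
        ring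


lemma oneD_upper {c j : ℝ} (hc : 4 ≤ c) (hj : 0 ≤ j) :
    |(∫ r in (c-1)..(2*c+1), r^2 * (r - 1)^(-j)) - ∫ r in c..(2*c), r^2 * r^(-j)|
      ≤ (18 + 18*j) * 2^j * c^(2-j) := by
  have hc0 : (0:ℝ) < c := by linarith
  have hF1 : IntervalIntegrable (fun r : ℝ => r^2 * (r + (-1)) ^ (-j)) volume (c-1) c := by
    apply intervalIntegrable_shift
    intro x hx
    rw [Set.uIcc_of_le (by linarith)] at hx
    have := hx.1; nlinarith
  have hF2 : IntervalIntegrable (fun r : ℝ => r^2 * (r + (-1)) ^ (-j)) volume c (2*c) := by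
    apply intervalIntegrable_shift
    intro x hx
    rw [Set.uIcc_of_le (by linarith)] at hx
    have := hx.1; nlinarith
  have hF3 : IntervalIntegrable (fun r : ℝ => r^2 * (r + (-1)) ^ (-j)) volume (2*c) (2*c+1) := by
    apply intervalIntegrable_shift
    intro x hx
    rw [Set.uIcc_of_le (by linarith)] at hx
    have := hx.1; nlinarith
  have hG : IntervalIntegrable (fun r : ℝ => r^2 * (r + 0) ^ (-j)) volume c (2*c) := by
    apply intervalIntegrable_shift
    intro x hx
    rw [Set.uIcc_of_le (by linarith)] at hx
    have := hx.1; nlinarith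
  simp only [add_neg_cancel_right, sub_eq_add_neg] at hF1 hF2 hF3 ⊢
  simp only [add_zero] at hG
  have split : (∫ r in (c + -1)..(2*c+1), r^2 * (r + -1)^(-j))
      = (∫ r in (c + -1)..c, r^2 * (r + -1)^(-j)) + (∫ r in c..(2*c), r^2 * (r + -1)^(-j))
        + ∫ r in (2*c)..(2*c+1), r^2 * (r + -1)^(-j) := by
    rw [intervalIntegral.integral_add_adjacent_intervals hF1 hF2,
      intervalIntegral.integral_add_adjacent_intervals (hF1.trans hF2) hF3]
  rw [split]
  have b1 : |∫ r in (c + -1)..c, r^2 * (r + -1)^(-j)| ≤ 9 * 2^j * c^(2-j) := by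
    have := intervalIntegral.norm_integral_le_of_norm_le_const (C := 9 * 2^j * c^(2-j))
      (f := fun r : ℝ => r^2 * (r + -1)^(-j)) (a := c + -1) (b := c) ?_
    · rw [Real.norm_eq_abs] at this
      calc |∫ r in (c + -1)..c, r^2 * (r + -1)^(-j)| ≤ 9 * 2^j * c^(2-j) * |c - (c + -1)| := this
        _ = 9 * 2^j * c^(2-j) := by norm_num
    · intro x hx
      rw [Set.uIoc_of_le (by linarith)] at hx
      rw [Real.norm_eq_abs]
      apply prod_bound hc0 hj
      · rw [abs_le]; constructor <;> nlinarith [hx.1, hx.2]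
      · nlinarith [hx.1]
  have b3 : |∫ r in (2*c)..(2*c+1), r^2 * (r + -1)^(-j)| ≤ 9 * 2^j * c^(2-j) := by
    have := intervalIntegral.norm_integral_le_of_norm_le_const (C := 9 * 2^j * c^(2-j))
      (f := fun r : ℝ => r^2 * (r + -1)^(-j)) (a := 2*c) (b := 2*c+1) ?_
    · rw [Real.norm_eq_abs] at this
      calc |∫ r in (2*c)..(2*c+1), r^2 * (r + -1)^(-j)|
          ≤ 9 * 2^j * c^(2-j) * |2*c+1 - 2*c| := this
        _ = 9 * 2^j * c^(2-j) := by norm_num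
    · intro x hx
      rw [Set.uIoc_of_le (by linarith)] at hx
      rw [Real.norm_eq_abs]
      apply prod_bound hc0 hj
      · rw [abs_le]; constructor <;> nlinarith [hx.1, hx.2]
      · nlinarith [hx.1]
  have b2 : |(∫ r in c..(2*c), r^2 * (r + -1)^(-j)) - ∫ r in c..(2*c), r^2 * r^(-j)|
      ≤ 18 * j * 2^j * c^(2-j) := by
    rw [← intervalIntegral.integral_sub hF2 hG]
    have := intervalIntegral.norm_integral_le_of_norm_le_const (C := 18 * j * 2^j * c^(1-j))
      (f := fun r : ℝ => r^2 * (r + -1)^(-j) - r^2 * r^(-j)) (a := c) (b := 2*c) ?_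
    · rw [Real.norm_eq_abs] at this
      calc |∫ r in c..(2*c), (r^2 * (r + -1)^(-j) - r^2 * r^(-j))|
          ≤ 18 * j * 2^j * c^(1-j) * |2*c - c| := this
        _ = 18 * j * 2^j * c^(1-j) * c := by rw [abs_of_nonneg (by linarith)]; ring_nf
        _ = 18 * j * 2^j * c^(2-j) := by
            rw [show (2:ℝ) - j = (1-j) + 1 by ring, Real.rpow_add hc0, Real.rpow_one]
            ring
    · intro x hx
      rw [Set.uIoc_of_le (by linarith)] at hx
      rw [Real.norm_eq_abs]
      have := prod_diff_bound (s := x + -1) (t := x) hc0 hj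
        (show |x| ≤ 3*c by rw [abs_le]; constructor <;> nlinarith [hx.1, hx.2])
        (by nlinarith [hx.1]) (by linarith) (by linarith)
      linarith [this]
  calc |(∫ r in (c + -1)..c, r^2 * (r + -1)^(-j)) + (∫ r in c..(2*c), r^2 * (r + -1)^(-j))
        + (∫ r in (2*c)..(2*c+1), r^2 * (r + -1)^(-j)) - ∫ r in c..(2*c), r^2 * r^(-j)|
      ≤ |∫ r in (c + -1)..c, r^2 * (r + -1)^(-j)|
        + |(∫ r in c..(2*c), r^2 * (r + -1)^(-j)) - ∫ r in c..(2*c), r^2 * r^(-j)|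
        + |∫ r in (2*c)..(2*c+1), r^2 * (r + -1)^(-j)| := by
        have h := abs_add_three (∫ r in (c + -1)..c, r^2 * (r + -1)^(-j))
          ((∫ r in c..(2*c), r^2 * (r + -1)^(-j)) - ∫ r in c..(2*c), r^2 * r^(-j))
          (∫ r in (2*c)..(2*c+1), r^2 * (r + -1)^(-j))
        calc _ = |(∫ r in (c + -1)..c, r^2 * (r + -1)^(-j))
              + ((∫ r in c..(2*c), r^2 * (r + -1)^(-j)) - ∫ r in c..(2*c), r^2 * r^(-j))
              + (∫ r in (2*c)..(2*c+1), r^2 * (r + -1)^(-j))| := by congr 1; ring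
          _ ≤ _ := by
              refine h.trans ?_
              linarith
    _ ≤ 9 * 2^j * c^(2-j) + 18 * j * 2^j * c^(2-j) + 9 * 2^j * c^(2-j) := by
        linarith [b1, b2, b3]
    _ = (18 + 18*j) * 2^j * c^(2-j) := by ring

lemma oneD_lower {c j : ℝ} (hc : 4 ≤ c) (hj : 0 ≤ j) :
    |(∫ r in c..(2*c), r^2 * r^(-j)) - ∫ r in (c+1)..(2*c-1), r^2 * (r + 1)^(-j)|
      ≤ (18 + 18*j) * 2^j * c^(2-j) := by
  have hc0 : (0:ℝ) < c := by linarith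
  have hG1 : IntervalIntegrable (fun r : ℝ => r^2 * (r + 0) ^ (-j)) volume c (c+1) := by
    apply intervalIntegrable_shift
    intro x hx
    rw [Set.uIcc_of_le (by linarith)] at hx
    have := hx.1; nlinarith
  have hG2 : IntervalIntegrable (fun r : ℝ => r^2 * (r + 0) ^ (-j)) volume (c+1) (2*c-1) := by
    apply intervalIntegrable_shift
    intro x hx
    rw [Set.uIcc_of_le (by linarith)] at hx
    have := hx.1; nlinarith
  have hG3 : IntervalIntegrable (fun r : ℝ => r^2 * (r + 0) ^ (-j)) volume (2*c-1) (2*c) := by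
    apply intervalIntegrable_shift
    intro x hx
    rw [Set.uIcc_of_le (by linarith)] at hx
    have := hx.1; nlinarith
  have hF : IntervalIntegrable (fun r : ℝ => r^2 * (r + 1) ^ (-j)) volume (c+1) (2*c-1) := by
    apply intervalIntegrable_shift
    intro x hx
    rw [Set.uIcc_of_le (by linarith)] at hx
    have := hx.1; nlinarith
  simp only [add_zero] at hG1 hG2 hG3
  have split : (∫ r in c..(2*c), r^2 * r^(-j))
      = (∫ r in c..(c+1), r^2 * r^(-j)) + (∫ r in (c+1)..(2*c-1), r^2 * r^(-j))
        + ∫ r in (2*c-1)..(2*c), r^2 * r^(-j) := by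
    rw [intervalIntegral.integral_add_adjacent_intervals hG1 hG2,
      intervalIntegral.integral_add_adjacent_intervals (hG1.trans hG2) hG3]
  rw [split]
  have b1 : |∫ r in c..(c+1), r^2 * r^(-j)| ≤ 9 * 2^j * c^(2-j) := by
    have := intervalIntegral.norm_integral_le_of_norm_le_const (C := 9 * 2^j * c^(2-j))
      (f := fun r : ℝ => r^2 * r^(-j)) (a := c) (b := c+1) ?_
    · rw [Real.norm_eq_abs] at this
      calc |∫ r in c..(c+1), r^2 * r^(-j)| ≤ 9 * 2^j * c^(2-j) * |c+1 - c| := this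
        _ = 9 * 2^j * c^(2-j) := by norm_num
    · intro x hx
      rw [Set.uIoc_of_le (by linarith)] at hx
      rw [Real.norm_eq_abs]
      apply prod_bound hc0 hj
      · rw [abs_le]; constructor <;> nlinarith [hx.1, hx.2]
      · nlinarith [hx.1]
  have b3 : |∫ r in (2*c-1)..(2*c), r^2 * r^(-j)| ≤ 9 * 2^j * c^(2-j) := by
    have := intervalIntegral.norm_integral_le_of_norm_le_const (C := 9 * 2^j * c^(2-j))
      (f := fun r : ℝ => r^2 * r^(-j)) (a := 2*c-1) (b := 2*c) ?_
    · rw [Real.norm_eq_abs] at this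
      calc |∫ r in (2*c-1)..(2*c), r^2 * r^(-j)|
          ≤ 9 * 2^j * c^(2-j) * |2*c - (2*c-1)| := this
        _ = 9 * 2^j * c^(2-j) := by norm_num
    · intro x hx
      rw [Set.uIoc_of_le (by linarith)] at hx
      rw [Real.norm_eq_abs]
      apply prod_bound hc0 hj
      · rw [abs_le]; constructor <;> nlinarith [hx.1, hx.2]
      · nlinarith [hx.1]
  have b2 : |(∫ r in (c+1)..(2*c-1), r^2 * r^(-j))
        - ∫ r in (c+1)..(2*c-1), r^2 * (r + 1)^(-j)|
      ≤ 18 * j * 2^j * c^(2-j) := by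
    rw [← intervalIntegral.integral_sub hG2 hF]
    have := intervalIntegral.norm_integral_le_of_norm_le_const (C := 18 * j * 2^j * c^(1-j))
      (f := fun r : ℝ => r^2 * r^(-j) - r^2 * (r + 1)^(-j)) (a := c+1) (b := 2*c-1) ?_
    · rw [Real.norm_eq_abs] at this
      calc |∫ r in (c+1)..(2*c-1), (r^2 * r^(-j) - r^2 * (r+1)^(-j))|
          ≤ 18 * j * 2^j * c^(1-j) * |2*c-1 - (c+1)| := this
        _ ≤ 18 * j * 2^j * c^(1-j) * c := by
            have h1 : |2*c-1 - (c+1)| = c - 2 := by rw [abs_of_nonneg (by linarith)]; ring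
            rw [h1]
            have : (0:ℝ) ≤ 18 * j * 2^j * c^(1-j) := by positivity
            nlinarith
        _ = 18 * j * 2^j * c^(2-j) := by
            rw [show (2:ℝ) - j = (1-j) + 1 by ring, Real.rpow_add hc0, Real.rpow_one]
            ring
    · intro x hx
      rw [Set.uIoc_of_le (by linarith)] at hx
      rw [Real.norm_eq_abs]
      exact prod_diff_bound (s := x) (t := x + 1) hc0 hj
        (by rw [abs_le]; constructor <;> nlinarith [hx.1, hx.2])
        (by nlinarith [hx.1]) (by linarith) (by linarith)
  calc |(∫ r in c..(c+1), r^2 * r^(-j)) + (∫ r in (c+1)..(2*c-1), r^2 * r^(-j))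
        + (∫ r in (2*c-1)..(2*c), r^2 * r^(-j)) - ∫ r in (c+1)..(2*c-1), r^2 * (r + 1)^(-j)|
      ≤ |∫ r in c..(c+1), r^2 * r^(-j)|
        + |(∫ r in (c+1)..(2*c-1), r^2 * r^(-j)) - ∫ r in (c+1)..(2*c-1), r^2 * (r + 1)^(-j)|
        + |∫ r in (2*c-1)..(2*c), r^2 * r^(-j)| := by
        have h := abs_add_three (∫ r in c..(c+1), r^2 * r^(-j))
          ((∫ r in (c+1)..(2*c-1), r^2 * r^(-j)) - ∫ r in (c+1)..(2*c-1), r^2 * (r + 1)^(-j))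
          (∫ r in (2*c-1)..(2*c), r^2 * r^(-j))
        calc _ = |(∫ r in c..(c+1), r^2 * r^(-j))
              + ((∫ r in (c+1)..(2*c-1), r^2 * r^(-j))
                - ∫ r in (c+1)..(2*c-1), r^2 * (r + 1)^(-j))
              + (∫ r in (2*c-1)..(2*c), r^2 * r^(-j))| := by congr 1; ring
          _ ≤ _ := by
              refine h.trans ?_
              linarith
    _ ≤ 9 * 2^j * c^(2-j) + 18 * j * 2^j * c^(2-j) + 9 * 2^j * c^(2-j) := by
        linarith [b1, b2, b3]
    _ = (18 + 18*j) * 2^j * c^(2-j) := by ring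

/-! ### Main estimate for `n ≥ 4` -/

lemma main_est {j : ℝ} (hj : 0 ≤ j) (hj3 : j ≠ 3) {n : ℕ} (hn : 4 ≤ n) :
    |(n:ℝ)^(j-3) * (∑ k ∈ shell n, nrm3 k ^ (-j))
        - 4*Real.pi*((2:ℝ)^(3-j)-1)/(3-j)|
      ≤ (4*Real.pi*(18+18*j)*2^j) / n := by
  set c : ℝ := (n:ℝ) with hcdef
  have hc : (4:ℝ) ≤ c := by rw [hcdef]; exact_mod_cast hn
  have hc0 : (0:ℝ) < c := by linarith
  set S : ℝ := ∑ k ∈ shell n, nrm3 k ^ (-j) with hSdef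
  set T : ℝ := ∫ r in c..(2*c), r^2 * r^(-j) with hTdef
  set U : ℝ := ∫ r in (c-1)..(2*c+1), r^2 * (r-1)^(-j) with hUdef
  set L : ℝ := ∫ r in (c+1)..(2*c-1), r^2 * (r+1)^(-j) with hLdef
  have hpi : (0:ℝ) < Real.pi := Real.pi_pos
  -- sandwich
  have hUp : S ≤ 4 * Real.pi * U := by
    have h := shell_sum_le hn hj
    rwa [integral_ann (by linarith) (by linarith) (fun r => (r-1)^(-j))] at h
  have hLo : 4 * Real.pi * L ≤ S := by
    have h := le_shell_sum hn hj
    rwa [integral_ann (by linarith) (by linarith) (fun r => (r+1)^(-j))] at h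
  have hU : |U - T| ≤ (18 + 18*j) * 2^j * c^(2-j) := oneD_upper hc hj
  have hL : |T - L| ≤ (18 + 18*j) * 2^j * c^(2-j) := oneD_lower hc hj
  have hmain : |S - 4 * Real.pi * T| ≤ 4 * Real.pi * ((18 + 18*j) * 2^j * c^(2-j)) := by
    rw [abs_le] at hU hL ⊢
    constructor
    · nlinarith [hL.1, hL.2, hLo]
    · nlinarith [hU.1, hU.2, hUp]
  -- value of T
  have hT : T = ((2:ℝ)^(3-j) * c^(3-j) - c^(3-j)) / (3-j) := by
    have e1 : T = ∫ r in c..(2*c), r^(2-j) := by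
      apply intervalIntegral.integral_congr
      intro r hr
      rw [Set.uIcc_of_le (by linarith)] at hr
      have hr0 : (0:ℝ) < r := lt_of_lt_of_le hc0 hr.1
      show r^2 * r^(-j) = r^(2-j)
      rw [show ((2:ℝ)-j) = 2 + (-j) by ring, Real.rpow_add hr0, Real.rpow_two]
    rw [e1, integral_rpow (Or.inr ⟨by intro h; apply hj3; linarith [h],
      by rw [Set.uIcc_of_le (by linarith)]; intro h; linarith [h.1]⟩)]
    rw [show (2:ℝ) - j + 1 = 3 - j by ring,
      Real.mul_rpow (by norm_num : (0:ℝ) ≤ 2) hc0.le]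
  have hpow : c^(j-3) * c^(3-j) = 1 := by
    rw [← Real.rpow_add hc0]
    norm_num
  have key : c^(j-3) * ((2:ℝ)^(3-j) * c^(3-j) - c^(3-j)) = (2:ℝ)^(3-j) - 1 := by
    rw [mul_sub, show c^(j-3) * ((2:ℝ)^(3-j) * c^(3-j))
      = (2:ℝ)^(3-j) * (c^(j-3) * c^(3-j)) by ring, hpow, mul_one]
  have hzeta : c^(j-3) * (4 * Real.pi * T) = 4*Real.pi*((2:ℝ)^(3-j)-1)/(3-j) := by
    rw [hT]
    calc c^(j-3) * (4 * Real.pi * (((2:ℝ)^(3-j) * c^(3-j) - c^(3-j))/(3-j)))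
        = 4 * Real.pi * (c^(j-3) * ((2:ℝ)^(3-j) * c^(3-j) - c^(3-j)))/(3-j) := by ring
      _ = 4*Real.pi*((2:ℝ)^(3-j)-1)/(3-j) := by rw [key]
  have hfinal : |c^(j-3) * S - 4*Real.pi*((2:ℝ)^(3-j)-1)/(3-j)|
      = c^(j-3) * |S - 4 * Real.pi * T| := by
    rw [← hzeta, ← mul_sub, abs_mul,
      abs_of_nonneg (Real.rpow_nonneg hc0.le _)]
  rw [hfinal]
  have hcp : c^(j-3) * (4 * Real.pi * ((18 + 18*j) * 2^j * c^(2-j)))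
      = (4*Real.pi*(18+18*j)*2^j) / c := by
    rw [div_eq_mul_inv, ← Real.rpow_neg_one c]
    rw [show (4*Real.pi*(18+18*j)*2^j) * c^(-1:ℝ)
        = (4 * Real.pi * ((18 + 18*j) * 2^j)) * c^(-1:ℝ) by ring]
    rw [show c^(j-3) * (4 * Real.pi * ((18 + 18*j) * 2^j * c^(2-j)))
        = (4 * Real.pi * ((18 + 18*j) * 2^j)) * (c^(j-3) * c^(2-j)) by ring]
    rw [← Real.rpow_add hc0]
    norm_num
  calc c^(j-3) * |S - 4 * Real.pi * T|
      ≤ c^(j-3) * (4 * Real.pi * ((18 + 18*j) * 2^j * c^(2-j))) :=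
        mul_le_mul_of_nonneg_left hmain (Real.rpow_nonneg hc0.le _)
    _ = (4*Real.pi*(18+18*j)*2^j) / c := hcp


lemma zetaS_eq (n : ℕ) (j : ℝ) :
    zetaS n j = (n:ℝ)^(j-3) * ∑ k ∈ shell n, nrm3 k ^ (-j) := by
  rw [zetaS]
  congr 1
  rw [← tsum_eq_shell n j]
  apply tsum_congr
  intro k
  exact if_congr Iff.rfl rfl rfl

end RS


/-- For `j ≥ 0`, `j ≠ 3`, the Riemann sum `ζ^n_{s,j}` converges to
`ζ_{s,j} = 4π (2^{3-j} - 1)/(3-j)` with rate `O(n⁻¹)`. -/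
theorem riemann_sum_shell_3d (j : ℝ) (hj : 0 ≤ j) (hj3 : j ≠ 3) :
    ∃ C > 0, ∀ n : ℕ, 1 ≤ n →
      |zetaS n j - 4 * Real.pi * ((2 : ℝ) ^ (3 - j) - 1) / (3 - j)| ≤ C / n := by
  set z : ℝ := 4 * Real.pi * ((2 : ℝ) ^ (3 - j) - 1) / (3 - j) with hz
  set K : ℝ := 4 * Real.pi * (18 + 18*j) * 2^j with hK
  have hKpos : 0 < K := by
    have := Real.pi_pos
    positivity
  set B : ℝ := 3 * (|zetaS 1 j - z| + |zetaS 2 j - z| + |zetaS 3 j - z|) with hB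
  have hBnn : 0 ≤ B := by positivity
  refine ⟨K + B, by positivity, ?_⟩
  intro n hn
  by_cases h4 : 4 ≤ n
  · have h := RS.main_est hj hj3 h4
    rw [← RS.zetaS_eq] at h
    have hn0 : (0:ℝ) < n := by positivity
    calc |zetaS n j - z| ≤ K / n := h
      _ ≤ (K + B) / n := by
          gcongr
          linarith
  · have a1 : 0 ≤ |zetaS 1 j - z| := abs_nonneg _
    have a2 : 0 ≤ |zetaS 2 j - z| := abs_nonneg _
    have a3 : 0 ≤ |zetaS 3 j - z| := abs_nonneg _
    interval_cases n
    · rw [le_div_iff₀ (by norm_num : (0:ℝ) < (1:ℕ))]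
      push_cast
      nlinarith
    · rw [le_div_iff₀ (by norm_num : (0:ℝ) < ((2:ℕ):ℝ))]
      push_cast
      nlinarith
    · rw [le_div_iff₀ (by norm_num : (0:ℝ) < ((3:ℕ):ℝ))]
      push_cast
      nlinarith
end

section
/- For j = 3, the Riemann sum ζ^n_{s,3} := Σ_{k ∈ ℤ³\{0}, n ≤ |k| ≤ 2n} 1/|k|^3 converges as n → ∞ to 4π log 2, with |ζ^n_{s,3} − 4π log 2| ≤ C/n for some constant C independent of n. -/
open scoped BigOperators Classical

open Metric MeasureTheory Set Real

local notation "E3" => EuclideanSpace ℝ (Fin 3)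

noncomputable def iv (k : Fin 3 → ℤ) : EuclideanSpace ℝ (Fin 3) :=
  (EuclideanSpace.equiv (Fin 3) ℝ).symm (fun i => (k i : ℝ))

lemma iv_apply (k : Fin 3 → ℤ) (i : Fin 3) : iv k i = (k i : ℝ) := rfl

lemma nrm3_eq (k : Fin 3 → ℤ) : nrm3 k = ‖iv k‖ := by
  rw [EuclideanSpace.norm_eq, Fin.sum_univ_three]
  simp [nrm3, iv_apply, sq_abs]

lemma norm_E3 (x : EuclideanSpace ℝ (Fin 3)) :
    ‖x‖ = Real.sqrt ((x 0)^2 + (x 1)^2 + (x 2)^2) := by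
  rw [EuclideanSpace.norm_eq, Fin.sum_univ_three]
  simp [sq_abs]

lemma abs_le_nrm (k : Fin 3 → ℤ) (i : Fin 3) : |(k i : ℝ)| ≤ nrm3 k := by
  rw [nrm3]
  rw [show |(k i : ℝ)| = Real.sqrt ((k i:ℝ)^2) by rw [Real.sqrt_sq_eq_abs]]
  apply Real.sqrt_le_sqrt
  fin_cases i <;> simp <;> nlinarith [sq_nonneg ((k 0 : ℝ)), sq_nonneg ((k 1:ℝ)), sq_nonneg ((k 2:ℝ))]


lemma gamma52 : Real.Gamma ((3:ℝ)/2 + 1) = 3/4 * Real.sqrt π := by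
  rw [Real.Gamma_add_one (by norm_num)]
  rw [show (3:ℝ)/2 = 1/2 + 1 by norm_num, Real.Gamma_add_one (by norm_num),
    Real.Gamma_one_half_eq]
  ring

lemma vol_ball_one : (volume (ball (0 : E3) 1)).toReal = 4 * π / 3 := by
  rw [EuclideanSpace.volume_ball]
  have h1 : (0:ℝ) < Real.sqrt π := Real.sqrt_pos.mpr Real.pi_pos
  rw [show (Fintype.card (Fin 3)) = 3 by simp]
  rw [show ((3:ℕ):ℝ)/2 + 1 = (3:ℝ)/2 + 1 by norm_num, gamma52]
  rw [ENNReal.ofReal_one, one_pow, one_mul, ENNReal.toReal_ofReal (by positivity)]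
  rw [show Real.sqrt π ^ 3 = π * Real.sqrt π by
    rw [pow_succ, Real.sq_sqrt Real.pi_pos.le]]
  field_simp

lemma dim_E3 : Module.finrank ℝ E3 = 3 := by simp [finrank_euclideanSpace]

lemma shell_integral (n : ℕ) (hn : 1 ≤ n) :
    ∫ x in {x : E3 | (n:ℝ) ≤ ‖x‖ ∧ ‖x‖ ≤ 2*n}, 1 / ‖x‖^3 = 4 * π * Real.log 2 := by
  have hn1 : (1:ℝ) ≤ n := by exact_mod_cast hn
  set g : ℝ → ℝ := indicator (Icc (n:ℝ) (2*n)) (fun r => 1/r^3) with hg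
  have hA : {x : E3 | (n:ℝ) ≤ ‖x‖ ∧ ‖x‖ ≤ 2*n}
      = (fun x : E3 => ‖x‖) ⁻¹' (Icc (n:ℝ) (2*n)) := by
    ext x; simp [Set.mem_Icc]
  have hAm : MeasurableSet {x : E3 | (n:ℝ) ≤ ‖x‖ ∧ ‖x‖ ≤ 2*n} := by
    rw [hA]; exact (continuous_norm.measurable) measurableSet_Icc
  rw [← integral_indicator hAm]
  have hpt : (fun x : E3 => indicator {x : E3 | (n:ℝ) ≤ ‖x‖ ∧ ‖x‖ ≤ 2*n}
      (fun x => 1/‖x‖^3) x) = fun x : E3 => g ‖x‖ := by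
    funext x
    simp only [hg, Set.indicator_apply, Set.mem_Icc, Set.mem_setOf_eq]
  rw [hpt]
  rw [MeasureTheory.integral_fun_norm_addHaar volume g, dim_E3, measureReal_def, vol_ball_one]
  have hinner : ∫ y in Ioi (0:ℝ), y ^ (3-1) • g y = Real.log 2 := by
    have h1 : ∫ y in Ioi (0:ℝ), y ^ (3-1) • g y
        = ∫ y in Ioi (0:ℝ), indicator (Icc (n:ℝ) (2*n)) (fun r => r^2 * (1/r^3)) y := by
      apply setIntegral_congr_fun measurableSet_Ioi
      intro y _
      simp only [hg, Set.indicator_apply, smul_eq_mul]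
      by_cases h : y ∈ Icc (n:ℝ) (2*n) <;> simp [h]
    rw [h1, integral_indicator measurableSet_Icc, Measure.restrict_restrict measurableSet_Icc]
    have hsub : Icc (n:ℝ) (2*n) ⊆ Ioi 0 := by
      intro y hy
      have := (Set.mem_Icc.mp hy).1
      exact Set.mem_Ioi.mpr (lt_of_lt_of_le (by linarith : (0:ℝ) < (n:ℝ)) this)
    rw [Set.inter_eq_self_of_subset_left hsub]
    have h2 : ∫ y in Icc (n:ℝ) (2*n), (fun r => r^2 * (1/r^3)) y
        = ∫ y in Icc (n:ℝ) (2*n), 1 / y := by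
      apply setIntegral_congr_fun measurableSet_Icc
      intro y hy
      have hy0 : (0:ℝ) < y := lt_of_lt_of_le (by positivity) hy.1
      field_simp
    rw [h2, MeasureTheory.integral_Icc_eq_integral_Ioc,
      ← intervalIntegral.integral_of_le (by nlinarith)]
    rw [integral_one_div (by
      intro h
      rw [Set.mem_uIcc] at h
      rcases h with h | h <;> nlinarith)]
    rw [show (2*(n:ℝ))/n = 2 by field_simp]
  rw [hinner]
  simp only [smul_eq_mul, nsmul_eq_mul]
  ring


noncomputable def Qc (k : Fin 3 → ℤ) : Set (EuclideanSpace ℝ (Fin 3)) :=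
  (MeasurableEquiv.toLp 2 (Fin 3 → ℝ)).symm ⁻¹' (Set.univ.pi fun i => Ico (k i : ℝ) (k i + 1))

lemma mem_Qc {k : Fin 3 → ℤ} {x : EuclideanSpace ℝ (Fin 3)} :
    x ∈ Qc k ↔ ∀ i, (k i : ℝ) ≤ x i ∧ x i < k i + 1 := by
  simp [Qc, Set.mem_pi, Set.mem_Ico]

lemma measurable_Qc (k : Fin 3 → ℤ) : MeasurableSet (Qc k) :=
  (MeasurableEquiv.toLp 2 (Fin 3 → ℝ)).symm.measurable
    (MeasurableSet.univ_pi fun i => measurableSet_Ico)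

lemma vol_Qc (k : Fin 3 → ℤ) : volume (Qc k) = 1 := by
  rw [Qc, (EuclideanSpace.volume_preserving_symm_measurableEquiv_toLp (Fin 3)).measure_preimage
    ((MeasurableSet.univ_pi fun i => measurableSet_Ico).nullMeasurableSet)]
  rw [volume_pi_pi]
  simp

lemma disjoint_Qc {k k' : Fin 3 → ℤ} (h : k ≠ k') : Disjoint (Qc k) (Qc k') := by
  rw [Set.disjoint_left]
  intro x hx hx'
  apply h
  funext i
  have h1 := (mem_Qc.mp hx) i
  have h2 := (mem_Qc.mp hx') i
  have e1 : ⌊x i⌋ = k i := Int.floor_eq_iff.mpr ⟨h1.1, h1.2⟩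
  have e2 : ⌊x i⌋ = k' i := Int.floor_eq_iff.mpr ⟨h2.1, h2.2⟩
  rw [← e1, e2]

lemma mem_Qc_floor (x : EuclideanSpace ℝ (Fin 3)) : x ∈ Qc (fun i => ⌊x i⌋) := by
  rw [mem_Qc]
  exact fun i => ⟨Int.floor_le _, Int.lt_floor_add_one _⟩

lemma norm_sub_iv_le {k : Fin 3 → ℤ} {x : EuclideanSpace ℝ (Fin 3)}
    (hx : x ∈ Qc k) : ‖x - iv k‖ ≤ 2 := by
  have h := mem_Qc.mp hx
  have hnorm : ‖x - iv k‖ = Real.sqrt ((x 0 - k 0)^2 + (x 1 - k 1)^2 + (x 2 - k 2)^2) := by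
    rw [EuclideanSpace.norm_eq, Fin.sum_univ_three]
    norm_num [iv_apply, sq_abs]
  rw [hnorm]
  have : (x 0 - k 0)^2 + (x 1 - k 1)^2 + (x 2 - k 2)^2 ≤ 4 := by
    have h0 := h 0; have h1 := h 1; have h2 := h 2
    nlinarith [h0.1, h0.2, h1.1, h1.2, h2.1, h2.2]
  calc Real.sqrt ((x 0 - k 0)^2 + (x 1 - k 1)^2 + (x 2 - k 2)^2)
      ≤ Real.sqrt 4 := Real.sqrt_le_sqrt this
    _ = 2 := by rw [show (4:ℝ) = 2^2 by norm_num, Real.sqrt_sq (by norm_num)]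



lemma inv_cube_diff {m M a b : ℝ} (hm : 0 < m) (ha : m ≤ a) (hb : m ≤ b)
    (haM : a ≤ M) (hbM : b ≤ M) :
    |1/a^3 - 1/b^3| ≤ 3*M^2/m^6 * |a-b| := by
  have key : ∀ a b : ℝ, m ≤ a → m ≤ b → a ≤ M → b ≤ M → a ≤ b →
      1/a^3 - 1/b^3 ≤ 3*M^2/m^6 * (b-a) := by
    intro a b ha hb haM hbM hab
    have ha0 : 0 < a := lt_of_lt_of_le hm ha
    have hb0 : 0 < b := lt_of_lt_of_le hm hb
    have h1 : 1/a^3 - 1/b^3 = (b^3-a^3)/(a^3*b^3) := by field_simp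
    have e1 : a^2 + a*b + b^2 ≤ 3*M^2 := by nlinarith
    have e2 : b^3 - a^3 ≤ 3*M^2*(b-a) := by nlinarith [mul_le_mul_of_nonneg_left e1 (sub_nonneg.2 hab)]
    have e3 : m^3 ≤ a^3 := pow_le_pow_left₀ hm.le ha 3
    have e4 : m^3 ≤ b^3 := pow_le_pow_left₀ hm.le hb 3
    have e5 : m^6 ≤ a^3*b^3 := by
      have := mul_le_mul e3 e4 (pow_nonneg hm.le 3) (pow_nonneg ha0.le 3)
      nlinarith [this]
    rw [h1, show 3*M^2/m^6 * (b-a) = (3*M^2*(b-a))/m^6 by ring]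
    exact div_le_div₀ (by nlinarith) e2 (by positivity) e5
  have ha0 : 0 < a := lt_of_lt_of_le hm ha
  have hb0 : 0 < b := lt_of_lt_of_le hm hb
  rcases le_total a b with hab | hab
  · have h0 : 1/b^3 ≤ 1/a^3 := one_div_le_one_div_of_le (by positivity) (pow_le_pow_left₀ ha0.le hab 3)
    rw [abs_of_nonneg (by linarith), abs_of_nonpos (by linarith), neg_sub]
    exact key a b ha hb haM hbM hab
  · have h0 : 1/a^3 ≤ 1/b^3 := one_div_le_one_div_of_le (by positivity) (pow_le_pow_left₀ hb0.le hab 3)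
    rw [abs_of_nonpos (by linarith), abs_of_nonneg (by linarith), neg_sub]
    exact key b a hb ha hbM haM hab

lemma measurable_f : Measurable (fun x : E3 => 1/‖x‖^3) :=
  measurable_const.div ((measurable_norm).pow_const 3)

lemma integrableOn_f {s : Set (EuclideanSpace ℝ (Fin 3))} {R m : ℝ} (hm : 0 < m)
    (hsub : s ⊆ closedBall 0 R) (hlow : ∀ x ∈ s, m ≤ ‖x‖) (hs : MeasurableSet s) :
    IntegrableOn (fun x : E3 => 1/‖x‖^3) s := by
  apply Measure.integrableOn_of_bounded (μ := volume) (M := 1/m^3)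
    (ne_of_lt (lt_of_le_of_lt (measure_mono hsub) (measure_closedBall_lt_top)))
    measurable_f.aestronglyMeasurable
  · rw [ae_restrict_iff' hs]
    filter_upwards with x hx
    have h1 : m ≤ ‖x‖ := hlow x hx
    have h2 : (0:ℝ) < ‖x‖ := lt_of_lt_of_le hm h1
    rw [Real.norm_eq_abs, abs_of_nonneg (by positivity)]
    apply div_le_div₀ (by positivity) le_rfl (by positivity) (pow_le_pow_left₀ hm.le h1 3)

lemma vol_cB (R : ℝ) (hR : 0 ≤ R) :
    (volume (closedBall (0:E3) R)).toReal = 4*π/3 * R^3 := by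
  rw [EuclideanSpace.volume_closedBall]
  have h1 : (0:ℝ) < Real.sqrt π := Real.sqrt_pos.mpr Real.pi_pos
  rw [show (Fintype.card (Fin 3)) = 3 by simp]
  rw [show ((3:ℕ):ℝ)/2 + 1 = (3:ℝ)/2 + 1 by norm_num, gamma52]
  rw [← ENNReal.ofReal_pow hR, ENNReal.toReal_mul, ENNReal.toReal_ofReal (by positivity),
    ENNReal.toReal_ofReal (by positivity)]
  rw [show Real.sqrt π ^ 3 = π * Real.sqrt π by rw [pow_succ, Real.sq_sqrt Real.pi_pos.le]]
  field_simp

lemma vol_bl (R : ℝ) (hR : 0 ≤ R) :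
    (volume (ball (0:E3) R)).toReal = 4*π/3 * R^3 := by
  rw [EuclideanSpace.volume_ball]
  have h1 : (0:ℝ) < Real.sqrt π := Real.sqrt_pos.mpr Real.pi_pos
  rw [show (Fintype.card (Fin 3)) = 3 by simp]
  rw [show ((3:ℕ):ℝ)/2 + 1 = (3:ℝ)/2 + 1 by norm_num, gamma52]
  rw [← ENNReal.ofReal_pow hR, ENNReal.toReal_mul, ENNReal.toReal_ofReal (by positivity),
    ENNReal.toReal_ofReal (by positivity)]
  rw [show Real.sqrt π ^ 3 = π * Real.sqrt π by rw [pow_succ, Real.sq_sqrt Real.pi_pos.le]]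
  field_simp

lemma vol_thin (r : ℝ) (hr : 2 ≤ r) :
    (volume (closedBall (0:E3) (r+2) \ ball 0 (r-2))).toReal ≤ 16 * π * (r+2)^2 := by
  rw [measure_diff (ball_subset_closedBall.trans (closedBall_subset_closedBall (by linarith)))
    measurableSet_ball.nullMeasurableSet (ne_of_lt measure_ball_lt_top)]
  rw [ENNReal.toReal_sub_of_le (measure_mono (ball_subset_closedBall.trans
    (closedBall_subset_closedBall (by linarith)))) (ne_of_lt measure_closedBall_lt_top)]
  rw [vol_cB _ (by linarith), vol_bl _ (by linarith)]
  nlinarith [Real.pi_pos]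

lemma cube_est (n : ℕ) (hn : 4 ≤ n) (k : Fin 3 → ℤ)
    (hk1 : (n:ℝ) ≤ nrm3 k) (hk2 : nrm3 k ≤ 2*n) :
    |1/(nrm3 k)^3 - ∫ x in Qc k, 1/‖x‖^3| ≤ 6144/(n:ℝ)^4 := by
  have hnr : (4:ℝ) ≤ n := by exact_mod_cast hn
  have hm : (0:ℝ) < (n:ℝ) - 2 := by linarith
  set c : ℝ := 1/(nrm3 k)^3 with hc
  -- pointwise bound on the cube
  have key : ∀ x ∈ Qc k, |1/‖x‖^3 - c| ≤ 6144/(n:ℝ)^4 := by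
    intro x hx
    have hd : |‖x‖ - ‖iv k‖| ≤ 2 :=
      le_trans (abs_norm_sub_norm_le x (iv k)) (norm_sub_iv_le hx)
    rw [abs_le] at hd
    have hkn : nrm3 k = ‖iv k‖ := nrm3_eq k
    have hx1 : (n:ℝ) - 2 ≤ ‖x‖ := by rw [hkn] at hk1; linarith
    have hx2 : ‖x‖ ≤ 2*(n:ℝ) + 2 := by rw [hkn] at hk2; linarith
    have hb1 : (n:ℝ) - 2 ≤ ‖iv k‖ := by rw [hkn] at hk1; linarith
    have hb2 : ‖iv k‖ ≤ 2*(n:ℝ) + 2 := by rw [hkn] at hk2; linarith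
    have hlip := inv_cube_diff (M := 2*(n:ℝ)+2) hm hx1 hb1 hx2 hb2
    rw [hc, hkn]
    refine le_trans hlip ?_
    have habs : |‖x‖ - ‖iv k‖| ≤ 2 := by rw [abs_le]; exact hd
    have hfac : (0:ℝ) ≤ 3*(2*(n:ℝ)+2)^2/((n:ℝ)-2)^6 := by positivity
    refine le_trans (mul_le_mul_of_nonneg_left habs hfac) ?_
    -- arithmetic: 3*(2n+2)^2/(n-2)^6 * 2 ≤ 6144/n^4
    have h64 : ((n:ℝ))^6 ≤ 64*((n:ℝ)-2)^6 := by
      have h := pow_le_pow_left₀ (by positivity : (0:ℝ) ≤ (n:ℝ))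
        (show (n:ℝ) ≤ 2*((n:ℝ)-2) by linarith) 6
      rw [show (2*((n:ℝ)-2))^6 = 64*((n:ℝ)-2)^6 by ring] at h
      exact h
    have h9 : (2*(n:ℝ)+2)^2 ≤ 9*(n:ℝ)^2 := by nlinarith
    rw [div_mul_eq_mul_div, div_le_div_iff₀ (by positivity) (by positivity)]
    nlinarith [mul_le_mul_of_nonneg_right h9 (by positivity : (0:ℝ) ≤ (n:ℝ)^4),
      mul_le_mul_of_nonneg_left h64 (by norm_num : (0:ℝ) ≤ 96)]
  -- integrability on the cube
  have hsubB : Qc k ⊆ closedBall 0 (2*(n:ℝ)+2) := by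
    intro x hx
    rw [mem_closedBall, dist_zero_right]
    have hd : |‖x‖ - ‖iv k‖| ≤ 2 :=
      le_trans (abs_norm_sub_norm_le x (iv k)) (norm_sub_iv_le hx)
    rw [abs_le] at hd
    have := nrm3_eq k
    linarith [hk2, this ▸ hk2]
  have hlow : ∀ x ∈ Qc k, (n:ℝ) - 2 ≤ ‖x‖ := by
    intro x hx
    have hd : |‖x‖ - ‖iv k‖| ≤ 2 :=
      le_trans (abs_norm_sub_norm_le x (iv k)) (norm_sub_iv_le hx)
    rw [abs_le] at hd
    have hkn : nrm3 k = ‖iv k‖ := nrm3_eq k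
    rw [hkn] at hk1; linarith
  have hint : IntegrableOn (fun x : E3 => 1/‖x‖^3) (Qc k) :=
    integrableOn_f hm hsubB hlow (measurable_Qc k)
  have hμfin : volume (Qc k) < ⊤ := by rw [vol_Qc]; exact ENNReal.one_lt_top
  -- ∫ (f - c) = ∫ f - c
  have hsplit : ∫ x in Qc k, (1/‖x‖^3 - c) = (∫ x in Qc k, 1/‖x‖^3) - c := by
    rw [integral_sub hint (integrableOn_const hμfin.ne)]
    rw [setIntegral_const, measureReal_def, vol_Qc]
    simp
  have hb := norm_setIntegral_le_of_norm_le_const (μ := volume) (s := Qc k)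
    (C := 6144/(n:ℝ)^4) hμfin
    (fun x hx => by rw [Real.norm_eq_abs]; exact key x hx)
  rw [hsplit, measureReal_def, vol_Qc] at hb
  simp only [ENNReal.toReal_one, mul_one, Real.norm_eq_abs] at hb
  rw [abs_sub_comm]
  exact hb

lemma Qc_norm {k : Fin 3 → ℤ} {x : EuclideanSpace ℝ (Fin 3)} (hx : x ∈ Qc k) :
    ‖iv k‖ - 2 ≤ ‖x‖ ∧ ‖x‖ ≤ ‖iv k‖ + 2 := by
  have hd := le_trans (abs_norm_sub_norm_le x (iv k)) (norm_sub_iv_le hx)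
  rw [abs_le] at hd
  exact ⟨by linarith [hd.2], by linarith [hd.1]⟩

lemma main_est (n : ℕ) (hn : 4 ≤ n) :
    |(∑' k : Fin 3 → ℤ,
        if k ≠ 0 ∧ (n : ℝ) ≤ nrm3 k ∧ nrm3 k ≤ 2 * n then 1 / nrm3 k ^ 3 else 0)
      - 4 * Real.pi * Real.log 2| ≤ 800000 / n := by
  classical
  have hn1 : 1 ≤ n := le_trans (by norm_num) hn
  have hnr : (4:ℝ) ≤ n := by exact_mod_cast hn
  have hm : (0:ℝ) < (n:ℝ) - 2 := by linarith
  set box : Finset (Fin 3 → ℤ) := Fintype.piFinset fun _ => Finset.Icc (-(2*(n:ℤ))) (2*n) with hbox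
  set T : Finset (Fin 3 → ℤ) :=
    box.filter (fun k => k ≠ 0 ∧ (n : ℝ) ≤ nrm3 k ∧ nrm3 k ≤ 2 * n) with hT
  have hTmem : ∀ k ∈ T, (n:ℝ) ≤ nrm3 k ∧ nrm3 k ≤ 2*n :=
    fun k hk => (Finset.mem_filter.mp hk).2.2
  -- tsum equals finite sum over T
  have hts : (∑' k : Fin 3 → ℤ,
        if k ≠ 0 ∧ (n : ℝ) ≤ nrm3 k ∧ nrm3 k ≤ 2 * n then 1 / nrm3 k ^ 3 else 0)
      = ∑ k ∈ T, 1 / nrm3 k ^ 3 := by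
    rw [tsum_eq_sum (s := box) ?h0]
    · rw [hT, Finset.sum_filter]
    · intro k hk
      rw [if_neg]
      intro hPk
      apply hk
      rw [hbox, Fintype.mem_piFinset]
      intro i
      have h1 : |(k i : ℝ)| ≤ 2*(n:ℝ) := le_trans (abs_le_nrm k i) hPk.2.2
      rw [abs_le] at h1
      rw [Finset.mem_Icc]
      constructor
      · exact_mod_cast (by push_cast; linarith [h1.1] : ((-(2*(n:ℤ)):ℤ):ℝ) ≤ (k i:ℝ))
      · exact_mod_cast (by push_cast; linarith [h1.2] : ((k i:ℝ)) ≤ ((2*(n:ℤ):ℤ):ℝ))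
  set f : EuclideanSpace ℝ (Fin 3) → ℝ := fun x => 1/‖x‖^3 with hf
  set A : Set (EuclideanSpace ℝ (Fin 3)) := {x | (n:ℝ) ≤ ‖x‖ ∧ ‖x‖ ≤ 2*n} with hA
  set U : Set (EuclideanSpace ℝ (Fin 3)) := ⋃ k ∈ T, Qc k with hU
  have hUprop : ∀ x ∈ U, (n:ℝ) - 2 ≤ ‖x‖ ∧ ‖x‖ ≤ 2*(n:ℝ)+2 := by
    intro x hx
    rw [hU, Set.mem_iUnion₂] at hx
    obtain ⟨k, hk, hxk⟩ := hx
    obtain ⟨h1, h2⟩ := hTmem k hk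
    rw [nrm3_eq] at h1 h2
    have h := Qc_norm hxk
    exact ⟨by linarith [h.1], by linarith [h.2]⟩
  have hUm : MeasurableSet U := T.measurableSet_biUnion (fun k _ => measurable_Qc k)
  have hAm : MeasurableSet A := by
    have : A = (fun x : EuclideanSpace ℝ (Fin 3) => ‖x‖) ⁻¹' (Set.Icc (n:ℝ) (2*n)) := by
      ext x; simp [hA, Set.mem_Icc]
    rw [this]; exact continuous_norm.measurable measurableSet_Icc
  have hUsub : U ⊆ closedBall 0 (2*(n:ℝ)+2) := fun x hx => by
    rw [mem_closedBall, dist_zero_right]; exact (hUprop x hx).2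
  have hAsub : A ⊆ closedBall 0 (2*(n:ℝ)+2) := fun x hx => by
    rw [mem_closedBall, dist_zero_right]; exact le_trans hx.2 (by linarith)
  have hintU : IntegrableOn f U := integrableOn_f hm hUsub (fun x hx => (hUprop x hx).1) hUm
  have hintA : IntegrableOn f A :=
    integrableOn_f (show (0:ℝ) < n by linarith) hAsub (fun x hx => hx.1) hAm
  -- integral over U as sum of cube integrals
  have hUint : ∫ x in U, f x = ∑ k ∈ T, ∫ x in Qc k, f x := by
    rw [hU]
    refine integral_biUnion_finset T (fun k _ => measurable_Qc k)
      (fun a _ b _ hab => disjoint_Qc hab) (fun k hk => ?_)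
    refine integrableOn_f (R := 2*(n:ℝ)+2) hm (fun x hx => ?_) (fun x hx => ?_) (measurable_Qc k)
    · rw [mem_closedBall, dist_zero_right]
      obtain ⟨h1, h2⟩ := hTmem k hk
      rw [nrm3_eq] at h2
      linarith [(Qc_norm hx).2]
    · obtain ⟨h1, h2⟩ := hTmem k hk
      rw [nrm3_eq] at h1
      linarith [(Qc_norm hx).1]
  -- cardinality bound
  have hcard : (T.card : ℝ) ≤ 125 * (n:ℝ)^3 := by
    have h1 : T.card ≤ box.card := Finset.card_filter_le _ _
    have h2 : box.card = (4*n+1)^3 := by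
      rw [hbox, Fintype.card_piFinset]
      simp only [Int.card_Icc, Finset.prod_const, Finset.card_univ, Fintype.card_fin]
      congr 1
      omega
    have h3 : ((4*n+1:ℕ):ℝ) ≤ 5*(n:ℝ) := by push_cast; linarith
    calc (T.card:ℝ) ≤ (box.card:ℝ) := by exact_mod_cast h1
      _ = ((4*n+1:ℕ):ℝ)^3 := by rw [h2]; push_cast; ring
      _ ≤ (5*(n:ℝ))^3 := pow_le_pow_left₀ (by positivity) h3 3
      _ = 125*(n:ℝ)^3 := by ring
  -- step C : sum vs integral over U
  have hstep1 : |(∑ k ∈ T, 1/nrm3 k ^3) - ∫ x in U, f x| ≤ 768000/(n:ℝ) := by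
    rw [hUint, ← Finset.sum_sub_distrib]
    refine le_trans (Finset.abs_sum_le_sum_abs _ _) ?_
    have hb : ∀ k ∈ T, |1/nrm3 k^3 - ∫ x in Qc k, f x| ≤ 6144/(n:ℝ)^4 := fun k hk =>
      cube_est n hn k (hTmem k hk).1 (hTmem k hk).2
    refine le_trans (Finset.sum_le_sum hb) ?_
    rw [Finset.sum_const, nsmul_eq_mul]
    calc (T.card:ℝ) * (6144/(n:ℝ)^4)
        ≤ 125*(n:ℝ)^3 * (6144/(n:ℝ)^4) :=
          mul_le_mul_of_nonneg_right hcard (by positivity)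
      _ = 768000/(n:ℝ) := by
          field_simp
          ring
  -- thin shells
  set W1 : Set (EuclideanSpace ℝ (Fin 3)) :=
    closedBall 0 ((n:ℝ)+2) \ ball 0 ((n:ℝ)-2) with hW1
  set W2 : Set (EuclideanSpace ℝ (Fin 3)) :=
    closedBall 0 (2*(n:ℝ)+2) \ ball 0 (2*(n:ℝ)-2) with hW2
  have hWmem1 : ∀ x : EuclideanSpace ℝ (Fin 3), (n:ℝ)-2 ≤ ‖x‖ → ‖x‖ ≤ (n:ℝ)+2 → x ∈ W1 := by
    intro x h1 h2
    refine ⟨by rwa [mem_closedBall, dist_zero_right], fun h => ?_⟩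
    rw [mem_ball, dist_zero_right] at h; linarith
  have hWmem2 : ∀ x : EuclideanSpace ℝ (Fin 3), 2*(n:ℝ)-2 ≤ ‖x‖ → ‖x‖ ≤ 2*(n:ℝ)+2 → x ∈ W2 := by
    intro x h1 h2
    refine ⟨by rwa [mem_closedBall, dist_zero_right], fun h => ?_⟩
    rw [mem_ball, dist_zero_right] at h; linarith
  have hUdiff : U \ A ⊆ W1 ∪ W2 := by
    intro x hx
    obtain ⟨hxU, hxA⟩ := hx
    obtain ⟨h1, h2⟩ := hUprop x hxU
    rw [hA, Set.mem_setOf_eq] at hxA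
    push_neg at hxA
    by_cases hcase : (n:ℝ) ≤ ‖x‖
    · right; exact hWmem2 x (by linarith [hxA hcase]) h2
    · left; push_neg at hcase; exact hWmem1 x h1 (by linarith)
  have hAdiff : A \ U ⊆ W1 ∪ W2 := by
    intro x hx
    obtain ⟨hxA, hxU⟩ := hx
    obtain ⟨h1, h2⟩ := hxA
    by_cases hc1 : ‖x‖ < (n:ℝ)+2
    · left; exact hWmem1 x (by linarith) (by linarith)
    · by_cases hc2 : 2*(n:ℝ)-2 < ‖x‖
      · right; exact hWmem2 x (by linarith) (by linarith)
      · exfalso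
        push_neg at hc1 hc2
        set k : Fin 3 → ℤ := fun i => ⌊x i⌋ with hk
        have hxQ : x ∈ Qc k := mem_Qc_floor x
        have hkn := Qc_norm hxQ
        have hnk1 : (n:ℝ) ≤ nrm3 k := by rw [nrm3_eq]; linarith [hkn.2]
        have hnk2 : nrm3 k ≤ 2*(n:ℝ) := by rw [nrm3_eq]; linarith [hkn.1]
        have hk0 : k ≠ 0 := by
          intro h0
          have hz : nrm3 k = 0 := by rw [h0]; simp [nrm3]
          rw [hz] at hnk1; linarith
        have hkbox : k ∈ box := by
          rw [hbox, Fintype.mem_piFinset]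
          intro i
          have hb := le_trans (abs_le_nrm k i) hnk2
          rw [abs_le] at hb
          rw [Finset.mem_Icc]
          constructor
          · exact_mod_cast (by push_cast; linarith [hb.1] : ((-(2*(n:ℤ)):ℤ):ℝ) ≤ (k i:ℝ))
          · exact_mod_cast (by push_cast; linarith [hb.2] : ((k i:ℝ)) ≤ ((2*(n:ℤ):ℤ):ℝ))
        apply hxU
        rw [hU, Set.mem_iUnion₂]
        exact ⟨k, Finset.mem_filter.mpr ⟨hkbox, hk0, hnk1, hnk2⟩, hxQ⟩
  -- volume of thin shells
  have hW1fin : volume W1 ≠ ⊤ :=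
    (lt_of_le_of_lt (measure_mono diff_subset) measure_closedBall_lt_top).ne
  have hW2fin : volume W2 ≠ ⊤ :=
    (lt_of_le_of_lt (measure_mono diff_subset) measure_closedBall_lt_top).ne
  have hWvol : (volume (W1 ∪ W2)).toReal ≤ 832*(n:ℝ)^2 := by
    have h1 : volume (W1 ∪ W2) ≤ volume W1 + volume W2 := measure_union_le _ _
    have h2 : (volume (W1 ∪ W2)).toReal ≤ (volume W1).toReal + (volume W2).toReal := by
      rw [← ENNReal.toReal_add hW1fin hW2fin]
      exact ENNReal.toReal_mono (ENNReal.add_ne_top.mpr ⟨hW1fin, hW2fin⟩) h1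
    have h3 := vol_thin (n:ℝ) (by linarith)
    have h4 := vol_thin (2*(n:ℝ)) (by linarith)
    have e1 : 16*π*((n:ℝ)+2)^2 ≤ 256*(n:ℝ)^2 := by
      nlinarith [Real.pi_le_four, Real.pi_pos, sq_nonneg ((n:ℝ)+2),
        mul_le_mul_of_nonneg_right Real.pi_le_four (sq_nonneg ((n:ℝ)+2))]
    have e2 : 16*π*(2*(n:ℝ)+2)^2 ≤ 576*(n:ℝ)^2 := by
      nlinarith [Real.pi_le_four, Real.pi_pos, sq_nonneg (2*(n:ℝ)+2),
        mul_le_mul_of_nonneg_right Real.pi_le_four (sq_nonneg (2*(n:ℝ)+2))]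
    linarith
  have hWunfin : volume (W1 ∪ W2) ≠ ⊤ :=
    (lt_of_le_of_lt (measure_union_le _ _)
      (ENNReal.add_lt_top.mpr ⟨hW1fin.lt_top, hW2fin.lt_top⟩)).ne
  have hcube8 : ((n:ℝ))^3 ≤ 8*((n:ℝ)-2)^3 := by
    have h := pow_le_pow_left₀ (by positivity : (0:ℝ) ≤ (n:ℝ))
      (show (n:ℝ) ≤ 2*((n:ℝ)-2) by linarith) 3
    rw [show (2*((n:ℝ)-2))^3 = 8*((n:ℝ)-2)^3 by ring] at h
    exact h
  -- bounds on integrals over the differences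
  have hdiffbound : ∀ s : Set (EuclideanSpace ℝ (Fin 3)), MeasurableSet s →
      s ⊆ W1 ∪ W2 → (∀ x ∈ s, (n:ℝ)-2 ≤ ‖x‖) → |∫ x in s, f x| ≤ 6656/(n:ℝ) := by
    intro s hs hsW hslow
    have hsfin : volume s < ⊤ :=
      lt_of_le_of_lt (measure_mono hsW) hWunfin.lt_top
    have hb := norm_setIntegral_le_of_norm_le_const (μ := volume) (s := s) (f := f)
      (C := 1/((n:ℝ)-2)^3) hsfin
      (fun x hx => by
        have h1 := hslow x hx
        have h2 : (0:ℝ) < ‖x‖ := lt_of_lt_of_le hm h1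
        rw [Real.norm_eq_abs, abs_of_nonneg (by positivity)]
        exact div_le_div₀ (by positivity) le_rfl (by positivity) (pow_le_pow_left₀ hm.le h1 3))
    rw [Real.norm_eq_abs] at hb
    refine le_trans hb ?_
    have hμ : (volume s).toReal ≤ 832*(n:ℝ)^2 :=
      le_trans (ENNReal.toReal_mono hWunfin (measure_mono hsW)) hWvol
    calc 1/((n:ℝ)-2)^3 * (volume s).toReal
        ≤ 1/((n:ℝ)-2)^3 * (832*(n:ℝ)^2) :=
          mul_le_mul_of_nonneg_left hμ (by positivity)
      _ ≤ 6656/(n:ℝ) := by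
          rw [one_div_mul_eq_div, div_le_div_iff₀ (by positivity) (by positivity)]
          nlinarith [hcube8]
  have hdiffU : |∫ x in U \ A, f x| ≤ 6656/(n:ℝ) :=
    hdiffbound _ (hUm.diff hAm) hUdiff (fun x hx => (hUprop x hx.1).1)
  have hdiffA : |∫ x in A \ U, f x| ≤ 6656/(n:ℝ) :=
    hdiffbound _ (hAm.diff hUm) hAdiff (fun x hx => by linarith [hx.1.1])
  -- compare ∫_U with ∫_A
  have hsplitU := integral_inter_add_diff (μ := volume) (s := U) (t := A) hAm hintU
  have hsplitA := integral_inter_add_diff (μ := volume) (s := A) (t := U) hUm hintA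
  have hUAint : |(∫ x in U, f x) - ∫ x in A, f x| ≤ 13312/(n:ℝ) := by
    have hcomm : U ∩ A = A ∩ U := Set.inter_comm U A
    have he : (∫ x in U, f x) - ∫ x in A, f x
        = (∫ x in U \ A, f x) - ∫ x in A \ U, f x := by
      rw [← hsplitU, ← hsplitA, hcomm]; ring
    rw [he]
    refine le_trans (abs_sub _ _) ?_
    have hr : 6656/(n:ℝ) + 6656/(n:ℝ) = 13312/(n:ℝ) := by ring
    linarith [hdiffU, hdiffA]
  have hAint : ∫ x in A, f x = 4*π*Real.log 2 := shell_integral n hn1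
  rw [hts]
  calc |(∑ k ∈ T, 1/nrm3 k ^3) - 4*π*Real.log 2|
      ≤ |(∑ k ∈ T, 1/nrm3 k ^3) - ∫ x in U, f x|
        + |(∫ x in U, f x) - 4*π*Real.log 2| := abs_sub_le _ _ _
    _ ≤ 768000/(n:ℝ) + 13312/(n:ℝ) := by
        refine add_le_add hstep1 ?_
        rw [← hAint]
        exact hUAint
    _ ≤ 800000/(n:ℝ) := by
        have hn0 : (0:ℝ) < n := by linarith
        rw [← add_div]
        exact (div_le_div_iff_of_pos_right hn0).mpr (by norm_num)

/-- The Riemann sum `ζ^n_{s,3} = Σ_{k ∈ ℤ³\{0}, n ≤ |k| ≤ 2n} |k|^{-3}` converges to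
`4π log 2`, with `|ζ^n_{s,3} - 4π log 2| ≤ C/n` for a constant `C` independent of `n`. -/
theorem riemann_sum_shell_3d_crit :
    ∃ C : ℝ, ∀ n : ℕ, 1 ≤ n →
      |(∑' k : Fin 3 → ℤ,
          if k ≠ 0 ∧ (n : ℝ) ≤ nrm3 k ∧ nrm3 k ≤ 2 * n then 1 / nrm3 k ^ 3 else 0)
        - 4 * Real.pi * Real.log 2| ≤ C / n := by
  classical
  let S : ℕ → ℝ := fun m => (∑' k : Fin 3 → ℤ,
      if k ≠ 0 ∧ (m : ℝ) ≤ nrm3 k ∧ nrm3 k ≤ 2 * m then 1 / nrm3 k ^ 3 else 0)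
    - 4 * Real.pi * Real.log 2
  refine ⟨800000 + 3*(|S 1| + |S 2| + |S 3|), fun n hn => ?_⟩
  have hD : (0:ℝ) ≤ |S 1| + |S 2| + |S 3| := by positivity
  have hn0 : (0:ℝ) < n := by
    have : 0 < n := lt_of_lt_of_le Nat.zero_lt_one hn
    exact_mod_cast this
  change |S n| ≤ _ / (n:ℝ)
  rcases le_or_gt 4 n with h4 | h4
  · refine le_trans (main_est n h4) ?_
    exact (div_le_div_iff_of_pos_right hn0).mpr (by linarith)
  · rw [le_div_iff₀ hn0]
    have hcases : n = 1 ∨ n = 2 ∨ n = 3 := by omega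
    rcases hcases with h|h|h <;> subst h <;> push_cast <;>
      linarith [abs_nonneg (S 1), abs_nonneg (S 2), abs_nonneg (S 3)]
end

section
/- For every δ > 0 there is a constant C(δ) such that for all n ≥ 1 and all h ∈ ℤ³\{0}: Σ_{k ∈ ℤ³\{0}, k ≠ −h, n ≤ |k| ≤ 2n} |h|² / (|k|³ |h+k|^{2+δ}) ≤ C(δ). -/
open scoped BigOperators Classical
set_option maxHeartbeats 1000000

lemma nrm3_nonneg (k : Fin 3 → ℤ) : 0 ≤ nrm3 k := Real.sqrt_nonneg _

lemma abs_coord_le (k : Fin 3 → ℤ) (i : Fin 3) : ((|k i| : ℤ) : ℝ) ≤ nrm3 k := by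
  rw [Int.cast_abs, ← Real.sqrt_sq_eq_abs]
  apply Real.sqrt_le_sqrt
  fin_cases i <;> simp <;>
    nlinarith [sq_nonneg ((k 0 : ℝ)), sq_nonneg ((k 1 : ℝ)), sq_nonneg ((k 2 : ℝ))]

lemma one_le_nrm3 {k : Fin 3 → ℤ} (hk : k ≠ 0) : 1 ≤ nrm3 k := by
  obtain ⟨i, hi⟩ := Function.ne_iff.mp hk
  have h1 : (1 : ℤ) ≤ |k i| := Int.one_le_abs (by simpa using hi)
  calc (1:ℝ) = ((1:ℤ):ℝ) := by norm_num
    _ ≤ ((|k i| : ℤ) : ℝ) := by exact_mod_cast h1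
    _ ≤ nrm3 k := abs_coord_le k i

lemma nrm3_eq_norm (k : Fin 3 → ℤ) :
    nrm3 k = ‖(WithLp.equiv 2 (Fin 3 → ℝ)).symm (fun i => (k i : ℝ))‖ := by
  rw [EuclideanSpace.norm_eq]
  simp [nrm3, Fin.sum_univ_three, Real.norm_eq_abs, sq_abs]

lemma nrm3_add_le (h k : Fin 3 → ℤ) : nrm3 (h + k) ≤ nrm3 h + nrm3 k := by
  rw [nrm3_eq_norm, nrm3_eq_norm, nrm3_eq_norm]
  have he : (WithLp.equiv 2 (Fin 3 → ℝ)).symm (fun i => ((h + k) i : ℝ)) =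
      (WithLp.equiv 2 (Fin 3 → ℝ)).symm (fun i => (h i : ℝ)) +
      (WithLp.equiv 2 (Fin 3 → ℝ)).symm (fun i => (k i : ℝ)) := by
    ext i
    simp [WithLp.equiv_symm_apply, PiLp.toLp_apply, Pi.add_apply]
  rw [he]
  exact norm_add_le _ _

lemma nrm3_neg (k : Fin 3 → ℤ) : nrm3 (-k) = nrm3 k := by
  unfold nrm3
  simp only [Pi.neg_apply, Int.cast_neg, neg_sq]

/-- The sup-norm box of radius `M` in `ℤ³`. -/
noncomputable def box3 (M : ℕ) : Finset (Fin 3 → ℤ) :=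
  Fintype.piFinset (fun _ => Finset.Icc (-(M:ℤ)) M)

lemma mem_box3 {M : ℕ} {k : Fin 3 → ℤ} : k ∈ box3 M ↔ ∀ i, |k i| ≤ (M:ℤ) := by
  simp [box3, Fintype.mem_piFinset, abs_le]

lemma card_box3 (M : ℕ) : (box3 M).card = (2*M+1)^3 := by
  rw [box3, Fintype.card_piFinset]
  simp [Int.card_Icc]
  omega

lemma box3_mono {M N : ℕ} (h : M ≤ N) : box3 M ⊆ box3 N := by
  intro k hk
  rw [mem_box3] at *
  intro i
  exact le_trans (hk i) (by exact_mod_cast h)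

lemma mem_box3_of_nrm3_le {M : ℕ} {k : Fin 3 → ℤ} (h : nrm3 k ≤ M) : k ∈ box3 M := by
  rw [mem_box3]
  intro i
  have := abs_coord_le k i
  exact_mod_cast this.trans h

lemma le_nrm3_of_not_box3 {M : ℕ} {k : Fin 3 → ℤ} (h : k ∉ box3 M) : (M:ℝ) + 1 ≤ nrm3 k := by
  rw [mem_box3] at h
  push_neg at h
  obtain ⟨i, hi⟩ := h
  have h1 : (M:ℤ) + 1 ≤ |k i| := hi
  calc (M:ℝ) + 1 = (((M:ℤ)+1 : ℤ) : ℝ) := by push_cast; ring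
    _ ≤ ((|k i| : ℤ) : ℝ) := by exact_mod_cast h1
    _ ≤ nrm3 k := abs_coord_le k i

lemma box3_zero : box3 0 = {0} := by
  ext k
  simp only [mem_box3, Finset.mem_singleton]
  constructor
  · intro hk
    funext i
    have := hk i
    simp at this ⊢
    omega
  · rintro rfl i
    simp

lemma shell_sum : ∀ n : ℕ, ∑ z ∈ box3 n \ {0}, 1 / nrm3 z ^ 2 ≤ 26 * (n:ℝ) := by
  intro n
  induction n with
  | zero => simp [box3_zero]
  | succ n ih =>
    have hsub : box3 n \ {0} ⊆ box3 (n+1) \ {0} :=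
      Finset.sdiff_subset_sdiff (box3_mono (by omega)) le_rfl
    rw [← Finset.sum_sdiff hsub]
    have hcard : ((box3 (n+1) \ {0}) \ (box3 n \ {0})).card ≤ 24*(n+1)^2 + 2 := by
      have h1 : (box3 (n+1) \ {0}) \ (box3 n \ {0}) ⊆ box3 (n+1) \ box3 n := by
        intro z hz
        simp only [Finset.mem_sdiff, Finset.mem_singleton] at hz ⊢
        exact ⟨hz.1.1, fun hzn => hz.2 ⟨hzn, hz.1.2⟩⟩
      have h2 := Finset.card_le_card h1
      have h3 : (box3 (n+1) \ box3 n).card = (2*(n+1)+1)^3 - (2*n+1)^3 := by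
        rw [Finset.card_sdiff_of_subset (box3_mono (by omega)), card_box3, card_box3]
      have hx : (2*(n+1)+1)^3 = (2*n+1)^3 + (24*(n+1)^2 + 2) := by ring
      omega
    have hbound : ∀ z ∈ (box3 (n+1) \ {0}) \ (box3 n \ {0}),
        1 / nrm3 z ^ 2 ≤ 1 / ((n:ℝ)+1)^2 := by
      intro z hz
      simp only [Finset.mem_sdiff, Finset.mem_singleton] at hz
      have hzn : z ∉ box3 n := fun hc => hz.2 ⟨hc, hz.1.2⟩
      have h1 : (n:ℝ) + 1 ≤ nrm3 z := le_nrm3_of_not_box3 hzn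
      have h2 : (0:ℝ) < (n:ℝ) + 1 := by positivity
      apply one_div_le_one_div_of_le (by positivity)
      nlinarith
    calc ∑ z ∈ (box3 (n+1) \ {0}) \ (box3 n \ {0}), 1 / nrm3 z ^ 2
          + ∑ z ∈ box3 n \ {0}, 1 / nrm3 z ^ 2
        ≤ ((box3 (n+1) \ {0}) \ (box3 n \ {0})).card * (1 / ((n:ℝ)+1)^2) + 26 * n := by
          gcongr
          exact Finset.sum_le_card_nsmul _ _ _ hbound |>.trans (by rw [nsmul_eq_mul])
      _ ≤ (24*((n:ℝ)+1)^2 + 2) * (1 / ((n:ℝ)+1)^2) + 26 * n := by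
          gcongr
          have := hcard
          calc (((box3 (n+1) \ {0}) \ (box3 n \ {0})).card : ℝ)
              ≤ ((24*(n+1)^2 + 2 : ℕ) : ℝ) := by exact_mod_cast this
            _ = 24*((n:ℝ)+1)^2 + 2 := by push_cast; ring
      _ ≤ 26 * ((n:ℝ)+1) := by
          have h2 : (0:ℝ) < ((n:ℝ)+1)^2 := by positivity
          have h4 : (24*((n:ℝ)+1)^2 + 2) * (1 / ((n:ℝ)+1)^2) = 24 + 2/((n:ℝ)+1)^2 := by
            field_simp
          have h5 : 2 / ((n:ℝ)+1)^2 ≤ 2 := by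
            rw [div_le_iff₀ h2]; nlinarith
          rw [h4]; linarith
      _ = 26 * ((n+1 : ℕ) : ℝ) := by push_cast; ring


/-- For every `δ > 0` there is `C(δ)` such that for all `n ≥ 1` and `h ∈ ℤ³\{0}`:
`Σ_{k ≠ 0, k ≠ -h, n ≤ |k| ≤ 2n} |h|²/(|k|³ |h+k|^{2+δ}) ≤ C(δ)`. -/
theorem lattice_convolution_bound_3d (δ : ℝ) (hδ : 0 < δ) :
    ∃ C > 0, ∀ n : ℕ, 1 ≤ n → ∀ h : Fin 3 → ℤ, h ≠ 0 →
      (∑' k : Fin 3 → ℤ,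
        if k ≠ 0 ∧ k ≠ -h ∧ (n : ℝ) ≤ nrm3 k ∧ nrm3 k ≤ 2 * n then
          nrm3 h ^ 2 / (nrm3 k ^ 3 * nrm3 (h + k) ^ (2 + δ)) else 0) ≤ C := by
  refine ⟨552, by norm_num, ?_⟩
  intro n hn h hh
  set f : (Fin 3 → ℤ) → ℝ := fun k =>
    if k ≠ 0 ∧ k ≠ -h ∧ (n : ℝ) ≤ nrm3 k ∧ nrm3 k ≤ 2 * n then
      nrm3 h ^ 2 / (nrm3 k ^ 3 * nrm3 (h + k) ^ (2 + δ)) else 0 with hf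
  have hnR : (1:ℝ) ≤ (n:ℝ) := by exact_mod_cast hn
  have hnpos : (0:ℝ) < n := by linarith
  have hsupp : ∀ k ∉ box3 (2*n), f k = 0 := by
    intro k hk
    rw [hf]
    simp only
    rw [if_neg]
    rintro ⟨-, -, -, h4⟩
    exact hk (mem_box3_of_nrm3_le (by push_cast; linarith [h4]))
  rw [tsum_eq_sum hsupp]
  set s : (Fin 3 → ℤ) → ℝ := fun k =>
    if h + k ∈ box3 n \ {0} then 1 / nrm3 (h+k) ^ 2 else 0 with hs
  have hsnonneg : ∀ k, 0 ≤ s k := by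
    intro k; rw [hs]; dsimp only; split <;> positivity
  have hpoint : ∀ k ∈ box3 (2*n), f k ≤ (2/(n:ℝ)) * s k + 4/(n:ℝ)^3 := by
    intro k _
    by_cases hc : k ≠ 0 ∧ k ≠ -h ∧ (n : ℝ) ≤ nrm3 k ∧ nrm3 k ≤ 2 * n
    · obtain ⟨hk0, hkh, hna, hna2⟩ := hc
      have hfk : f k = nrm3 h ^ 2 / (nrm3 k ^ 3 * nrm3 (h + k) ^ (2 + δ)) := by
        rw [hf]; exact if_pos ⟨hk0, hkh, hna, hna2⟩
      set a := nrm3 k with hadef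
      set b := nrm3 (h+k) with hbdef
      have hhk : h + k ≠ 0 := by
        intro hc0
        exact hkh (neg_eq_of_add_eq_zero_right hc0).symm
      have hb1 : (1:ℝ) ≤ b := one_le_nrm3 hhk
      have hapos : (0:ℝ) < a := lt_of_lt_of_le hnpos hna
      have hbpos : (0:ℝ) < b := by linarith
      -- triangle: nrm3 h ≤ b + a
      have htri : nrm3 h ≤ b + a := by
        have h1 : h = (h + k) + (-k) := by ring
        calc nrm3 h = nrm3 ((h+k) + (-k)) := by rw [← h1]
          _ ≤ nrm3 (h+k) + nrm3 (-k) := nrm3_add_le _ _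
          _ = b + a := by rw [nrm3_neg]
      have hnum : nrm3 h ^ 2 ≤ 2*a^2 + 2*b^2 := by
        have hsq : nrm3 h ^ 2 ≤ (b + a)^2 := pow_le_pow_left₀ (nrm3_nonneg h) htri 2
        nlinarith [sq_nonneg (a - b)]
      -- rpow bound
      have hrp : b ^ 2 ≤ b ^ (2 + δ) := by
        have h1 : b ^ ((2:ℝ) + δ) = b ^ (2:ℝ) * b ^ δ := Real.rpow_add hbpos 2 δ
        have h2 : b ^ (2:ℝ) = b ^ (2:ℕ) := by
          rw [← Real.rpow_natCast b 2]; norm_num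
        have h3 : (1:ℝ) ≤ b ^ δ := Real.one_le_rpow hb1 (le_of_lt hδ)
        calc b ^ 2 = b ^ (2:ℝ) * 1 := by rw [h2]; ring
          _ ≤ b ^ (2:ℝ) * b ^ δ := by
              apply mul_le_mul_of_nonneg_left h3
              positivity
          _ = b ^ ((2:ℝ) + δ) := h1.symm
      have hkey : f k ≤ 2/(a*b^2) + 2/a^3 := by
        rw [hfk]
        calc nrm3 h ^ 2 / (a ^ 3 * b ^ (2 + δ))
            ≤ (2*a^2 + 2*b^2) / (a^3 * b^2) := by
              apply div_le_div₀ (by positivity) hnum (by positivity)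
              have : (0:ℝ) ≤ a^3 := by positivity
              nlinarith [hrp]
          _ = 2/(a*b^2) + 2/a^3 := by field_simp
      by_cases hbn : b ≤ (n:ℝ)
      · have hmem : h + k ∈ box3 n \ {0} := by
          rw [Finset.mem_sdiff, Finset.mem_singleton]
          exact ⟨mem_box3_of_nrm3_le hbn, hhk⟩
        have hsk : s k = 1 / b^2 := by rw [hs]; exact if_pos hmem
        have h1 : 2/(a*b^2) ≤ (2/(n:ℝ)) * (1/b^2) := by
          rw [div_mul_div_comm, mul_one]
          apply div_le_div₀ (by norm_num) le_rfl (by positivity)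
          nlinarith
        have h2 : 2/a^3 ≤ 4/(n:ℝ)^3 := by
          apply div_le_div₀ (by norm_num) (by norm_num) (by positivity)
          exact pow_le_pow_left₀ (le_of_lt hnpos) hna 3
        rw [hsk]
        linarith
      · push_neg at hbn
        have h1 : 2/(a*b^2) ≤ 2/(n:ℝ)^3 := by
          apply div_le_div₀ (by norm_num) le_rfl (by positivity)
          have hb2 : (n:ℝ)^2 ≤ b^2 := pow_le_pow_left₀ (le_of_lt hnpos) (le_of_lt hbn) 2
          nlinarith
        have h2 : 2/a^3 ≤ 2/(n:ℝ)^3 := by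
          apply div_le_div₀ (by norm_num) le_rfl (by positivity)
          exact pow_le_pow_left₀ (le_of_lt hnpos) hna 3
        have h3 : (0:ℝ) ≤ (2/(n:ℝ)) * s k := by
          have := hsnonneg k
          positivity
        have h4 : 2/(n:ℝ)^3 + 2/(n:ℝ)^3 = 4/(n:ℝ)^3 := by ring
        linarith
    · have h0 : f k = 0 := by rw [hf]; exact if_neg hc
      have h3 : (0:ℝ) ≤ (2/(n:ℝ)) * s k := by
        have := hsnonneg k
        positivity
      rw [h0]
      have : (0:ℝ) ≤ 4/(n:ℝ)^3 := by positivity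
      linarith
  have hsum1 : ∑ k ∈ box3 (2*n), s k ≤ 26 * (n:ℝ) := by
    calc ∑ k ∈ box3 (2*n), s k
        = ∑ k ∈ (box3 (2*n)).filter (fun k => h + k ∈ box3 n \ {0}), 1 / nrm3 (h+k)^2 := by
          rw [Finset.sum_filter]
      _ = ∑ z ∈ ((box3 (2*n)).filter (fun k => h + k ∈ box3 n \ {0})).image (fun k => h + k),
            1 / nrm3 z ^ 2 := by
          rw [Finset.sum_image]
          intro x _ y _ hxy
          exact add_left_cancel hxy
      _ ≤ ∑ z ∈ box3 n \ {0}, 1 / nrm3 z ^ 2 := by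
          apply Finset.sum_le_sum_of_subset_of_nonneg
          · intro z hz
            simp only [Finset.mem_image, Finset.mem_filter] at hz
            obtain ⟨k, ⟨-, hk2⟩, rfl⟩ := hz
            exact hk2
          · intro z _ _
            positivity
      _ ≤ 26 * (n:ℝ) := shell_sum n
  have hcardF : ((box3 (2*n)).card : ℝ) = (4*(n:ℝ)+1)^3 := by
    rw [card_box3]; push_cast; ring
  calc ∑ k ∈ box3 (2*n), f k
      ≤ ∑ k ∈ box3 (2*n), ((2/(n:ℝ)) * s k + 4/(n:ℝ)^3) := Finset.sum_le_sum hpoint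
    _ = (2/(n:ℝ)) * (∑ k ∈ box3 (2*n), s k) + ((box3 (2*n)).card : ℝ) * (4/(n:ℝ)^3) := by
        rw [Finset.sum_add_distrib, ← Finset.mul_sum, Finset.sum_const, nsmul_eq_mul]
    _ ≤ (2/(n:ℝ)) * (26 * (n:ℝ)) + (4*(n:ℝ)+1)^3 * (4/(n:ℝ)^3) := by
        have t1 : (2/(n:ℝ)) * (∑ k ∈ box3 (2*n), s k) ≤ (2/(n:ℝ)) * (26*(n:ℝ)) :=
          mul_le_mul_of_nonneg_left hsum1 (by positivity)
        rw [hcardF]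
        linarith
    _ ≤ 52 + 500 := by
        have e1 : (2/(n:ℝ)) * (26 * (n:ℝ)) = 52 := by field_simp; ring
        have e2 : (4*(n:ℝ)+1)^3 ≤ 125 * (n:ℝ)^3 := by nlinarith [sq_nonneg ((n:ℝ)-1), sq_nonneg (n:ℝ)]
        have e3 : (4*(n:ℝ)+1)^3 * (4/(n:ℝ)^3) ≤ 500 := by
          rw [mul_div_assoc']
          rw [div_le_iff₀ (by positivity)]
          nlinarith
        linarith
    _ = 552 := by norm_num
end

section
/- Fix α, β > 0 with α + β = 6 and constants C₁, C₂ > 0, ρ ∈ [−1,1]. Define the mean helicity H^n := −(2ρ/(C₁C₂)) · n^{(α+β−2)/2 − 2} · Σ_{k ∈ ℤ²\{0}, n ≤ |k| ≤ 2n} |k|^{−(α+β−2)/2} · n^{−(α+β−6)/2} — equivalently H^n = −2ρ ζ^n_{H,2}/(C₁C₂) where ζ^n_{H,2} = Σ_{k∈ℤ²\{0}, n≤|k|≤2n} |k|^{−2}. Then H^n → H := −4πρ log 2/(C₁C₂) as n → ∞, with |H^n − H| ≤ C/n. -/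
open scoped BigOperators Classical

/-- Euclidean norm of an integer lattice point in `ℤ²`. -/
noncomputable def nrm2 (k : Fin 2 → ℤ) : ℝ :=
  Real.sqrt (((k 0 : ℝ)) ^ 2 + ((k 1 : ℝ)) ^ 2)

open MeasureTheory Real Set
open scoped ENNReal NNReal

noncomputable section Helic

/-- The annulus integrand. -/
noncomputable def fA (a b : ℝ) (x : ℂ) : ℝ :=
  if a ≤ ‖x‖ ∧ ‖x‖ ≤ b then (‖x‖ ^ 2)⁻¹ else 0

lemma integral_fA {a b : ℝ} (ha : 0 < a) (hab : a ≤ b) :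
    ∫ x : ℂ, fA a b x = (2 * π) * Real.log (b / a) := by
  rw [← Complex.integral_comp_polarCoord_symm (fA a b)]
  have h1 : ∀ p ∈ polarCoord.target,
      p.1 • fA a b (Complex.polarCoord.symm p)
        = (if a ≤ p.1 ∧ p.1 ≤ b then p.1⁻¹ else 0) * 1 := by
    rintro ⟨r, θ⟩ ⟨hr, hθ⟩
    simp only [fA, Complex.norm_polarCoord_symm, smul_eq_mul, mul_one]
    have hr' : (0:ℝ) < r := hr
    rw [abs_of_pos hr']
    by_cases h : a ≤ r ∧ r ≤ b
    · rw [if_pos h, if_pos h, sq]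
      field_simp
    · rw [if_neg h, if_neg h, mul_zero]
  rw [setIntegral_congr_fun (polarCoord.open_target.measurableSet) h1]
  rw [polarCoord_target, Measure.volume_eq_prod ℝ ℝ, setIntegral_prod_mul (fun r : ℝ => if a ≤ r ∧ r ≤ b then r⁻¹ else 0) (fun _ : ℝ => (1:ℝ))]
  have h2 : ∫ y in Ioo (-π) π, (1:ℝ) = 2 * π := by
    simp [Real.volume_Ioo]
    rw [max_eq_left (by positivity)]
    ring
  rw [h2]
  have h3 : (∫ x in Ioi (0:ℝ), if a ≤ x ∧ x ≤ b then x⁻¹ else 0) = Real.log (b / a) := by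
    have : ∀ x : ℝ, (if a ≤ x ∧ x ≤ b then x⁻¹ else 0) = (Icc a b).indicator (fun y => y⁻¹) x := by
      intro x
      simp [Set.indicator_apply, Set.mem_Icc]
    simp_rw [this]
    rw [setIntegral_indicator measurableSet_Icc]
    have : Ioi (0:ℝ) ∩ Icc a b = Icc a b := by
      apply inter_eq_self_of_subset_right
      intro x hx
      exact lt_of_lt_of_le ha hx.1
    rw [this, integral_Icc_eq_integral_Ioc, ← intervalIntegral.integral_of_le hab]
    exact integral_inv_of_pos ha (lt_of_lt_of_le ha hab)
  rw [h3]; ring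

/-- unit square at lattice point k -/
def Q (k : ℤ × ℤ) : Set ℂ :=
  Complex.measurableEquivRealProd ⁻¹'
    (Set.Ico (k.1 : ℝ) (k.1 + 1) ×ˢ Set.Ico (k.2 : ℝ) (k.2 + 1))

lemma mem_Q {k : ℤ × ℤ} {x : ℂ} :
    x ∈ Q k ↔ ⌊x.re⌋ = k.1 ∧ ⌊x.im⌋ = k.2 := by
  simp only [Q, Set.mem_preimage, Complex.measurableEquivRealProd_apply,
    Set.mem_prod, Set.mem_Ico]
  rw [Int.floor_eq_iff (z := k.1), Int.floor_eq_iff (z := k.2)]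

lemma measurableSet_Q (k : ℤ × ℤ) : MeasurableSet (Q k) :=
  Complex.measurableEquivRealProd.measurable
    ((measurableSet_Ico).prod (measurableSet_Ico))

lemma volume_Q (k : ℤ × ℤ) : volume (Q k) = 1 := by
  rw [Q, Complex.volume_preserving_equiv_real_prod.measure_preimage
    (((measurableSet_Ico).prod (measurableSet_Ico)).nullMeasurableSet)]
  rw [Measure.volume_eq_prod, Measure.prod_prod, Real.volume_Ico, Real.volume_Ico]
  simp

lemma Q_disjoint {k l : ℤ × ℤ} (h : k ≠ l) : Disjoint (Q k) (Q l) := by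
  rw [Set.disjoint_left]
  intro x hk hl
  rw [mem_Q] at hk hl
  exact h (Prod.ext (hk.1.symm.trans hl.1) (hk.2.symm.trans hl.2))

/-- the complex point of a lattice point -/
def cpt (k : ℤ × ℤ) : ℂ := Complex.mk (k.1 : ℝ) (k.2 : ℝ)

def A (k : ℤ × ℤ) : ℝ := ‖(cpt k)‖

lemma abs_near {k : ℤ × ℤ} {x : ℂ} (hx : x ∈ Q k) :
    |‖x‖ - A k| ≤ 2 := by
  rw [mem_Q] at hx
  have h1 : |‖x‖ - A k| ≤ ‖(x - cpt k)‖ :=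
    abs_norm_sub_norm_le x (cpt k)
  refine h1.trans ((Complex.norm_le_abs_re_add_abs_im _).trans ?_)
  have hre : (x - cpt k).re = x.re - (k.1 : ℝ) := by simp [cpt]
  have him : (x - cpt k).im = x.im - (k.2 : ℝ) := by simp [cpt]
  rw [hre, him]
  have h2 := Int.floor_le x.re
  have h3 := Int.lt_floor_add_one x.re
  have h4 := Int.floor_le x.im
  have h5 := Int.lt_floor_add_one x.im
  rw [hx.1] at h2 h3; rw [hx.2] at h4 h5
  have e1 : |x.re - (k.1 : ℝ)| ≤ 1 := abs_le.2 ⟨by linarith, by linarith⟩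
  have e2 : |x.im - (k.2 : ℝ)| ≤ 1 := abs_le.2 ⟨by linarith, by linarith⟩
  linarith

lemma count_le {T : Finset (ℤ × ℤ)} {Ω : Set ℂ} (hT : ∀ k ∈ T, Q k ⊆ Ω) :
    (T.card : ℝ≥0∞) ≤ volume Ω := by
  have hdisj : (↑T : Set (ℤ × ℤ)).PairwiseDisjoint Q := fun k _ l _ hkl => Q_disjoint hkl
  calc (T.card : ℝ≥0∞) = ∑ k ∈ T, volume (Q k) := by simp [volume_Q]
    _ = volume (⋃ k ∈ T, Q k) :=
        (measure_biUnion_finset hdisj fun k _ => measurableSet_Q k).symm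
    _ ≤ volume Ω := measure_mono (Set.iUnion₂_subset hT)

lemma vol_ann {c d : ℝ} (hc : 0 ≤ c) (hcd : c ≤ d) :
    volume {x : ℂ | c ≤ ‖x‖ ∧ ‖x‖ ≤ d}
      ≤ ENNReal.ofReal (π * (d ^ 2 - c ^ 2)) := by
  have hsub : {x : ℂ | c ≤ ‖x‖ ∧ ‖x‖ ≤ d}
      ⊆ Metric.closedBall 0 d \ Metric.ball 0 c := by
    intro x hx
    constructor
    · rw [Metric.mem_closedBall, dist_zero_right]; exact hx.2
    · rw [Metric.mem_ball, dist_zero_right]; exact not_lt.2 hx.1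
  refine (measure_mono hsub).trans ?_
  rw [measure_diff (Metric.ball_subset_closedBall.trans
      (Metric.closedBall_subset_closedBall hcd)) measurableSet_ball.nullMeasurableSet
      measure_ball_lt_top.ne]
  rw [Complex.volume_closedBall, Complex.volume_ball]
  have hpi : ((NNReal.pi : ℝ≥0) : ℝ≥0∞) = ENNReal.ofReal π := by
    rw [← ENNReal.ofReal_coe_nnreal]
    norm_num [NNReal.coe_real_pi]
  rw [hpi, ← ENNReal.ofReal_pow hc, ← ENNReal.ofReal_pow (hc.trans hcd),
    ← ENNReal.ofReal_mul (by positivity), ← ENNReal.ofReal_mul (by positivity),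
    ← ENNReal.ofReal_sub _ (by positivity)]
  apply ENNReal.ofReal_le_ofReal
  nlinarith [Real.pi_pos]

/-! ### integrability of fA -/

lemma fA_nonneg (a b : ℝ) (x : ℂ) : 0 ≤ fA a b x := by
  unfold fA; split_ifs with h
  · positivity
  · exact le_refl 0

lemma fA_le {a b : ℝ} (ha : 0 < a) (x : ℂ) : fA a b x ≤ (a ^ 2)⁻¹ := by
  unfold fA; split_ifs with h
  · exact inv_anti₀ (by positivity) (by nlinarith [h.1, norm_nonneg x])
  · positivity

lemma measurableSet_ann (a b : ℝ) :
    MeasurableSet {x : ℂ | a ≤ ‖x‖ ∧ ‖x‖ ≤ b} := by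
  have : {x : ℂ | a ≤ ‖x‖ ∧ ‖x‖ ≤ b}
      = (fun x : ℂ => ‖x‖) ⁻¹' (Set.Icc a b) := by
    ext x; simp [Set.mem_Icc]
  rw [this]
  exact (isClosed_Icc.preimage continuous_norm).measurableSet

lemma measurable_fA (a b : ℝ) : Measurable (fA a b) := by
  unfold fA
  exact Measurable.ite (measurableSet_ann a b)
    ((continuous_norm.measurable.pow_const 2).inv) measurable_const

lemma integrable_fA {a b : ℝ} (ha : 0 < a) : Integrable (fA a b) := by
  have heq : fA a b = ({x : ℂ | a ≤ ‖x‖ ∧ ‖x‖ ≤ b}).indicator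
      (fun x => (‖x‖ ^ 2)⁻¹) := by
    funext x
    by_cases h : a ≤ ‖x‖ ∧ ‖x‖ ≤ b <;>
      simp [fA, Set.indicator_apply, Set.mem_setOf_eq, h]
  rw [heq, integrable_indicator_iff (measurableSet_ann a b)]
  refine Measure.integrableOn_of_bounded (M := (a ^ 2)⁻¹) ?_ ?_ ?_
  · have hsub : {x : ℂ | a ≤ ‖x‖ ∧ ‖x‖ ≤ b} ⊆ Metric.closedBall 0 b := by
      intro x hx
      rw [Metric.mem_closedBall, dist_zero_right]
      exact hx.2
    exact ((measure_mono hsub).trans_lt measure_closedBall_lt_top).ne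
  · exact ((continuous_norm.measurable.pow_const 2).inv).aestronglyMeasurable
  · apply ae_restrict_of_forall_mem (measurableSet_ann a b)
    intro x hx
    rw [Real.norm_eq_abs, abs_of_nonneg (by positivity)]
    exact inv_anti₀ (by positivity) (by nlinarith [hx.1, norm_nonneg x])

/-! ### box, lattice sum -/

def box (n : ℕ) : Finset (ℤ × ℤ) :=
  Finset.Icc (-(2 * (n:ℤ) + 3)) (2 * (n:ℤ) + 3) ×ˢ
    Finset.Icc (-(2 * (n:ℤ) + 3)) (2 * (n:ℤ) + 3)

def g (n : ℕ) (k : ℤ × ℤ) : ℝ :=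
  if (n : ℝ) ≤ A k ∧ A k ≤ 2 * (n : ℝ) then (A k ^ 2)⁻¹ else 0

lemma card_box (n : ℕ) : (box n).card = (4 * n + 7) * (4 * n + 7) := by
  rw [box, Finset.card_product, Int.card_Icc]
  have : 2 * (n:ℤ) + 3 + 1 - -(2 * (n:ℤ) + 3) = ((4 * n + 7 : ℕ) : ℤ) := by push_cast; ring
  rw [this, Int.toNat_natCast]

lemma decomp {n : ℕ} (hn : 1 ≤ n) :
    ∫ x : ℂ, fA (n:ℝ) (2*(n:ℝ)) x = ∑ k ∈ box n, ∫ x in Q k, fA (n:ℝ) (2*(n:ℝ)) x := by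
  have hν : (0:ℝ) < n := by exact_mod_cast hn
  rw [← integral_biUnion_finset (box n) (fun k _ => measurableSet_Q k)
      (fun k _ l _ hkl => Q_disjoint hkl)
      (fun k _ => (integrable_fA hν).integrableOn)]
  symm
  apply setIntegral_eq_integral_of_forall_compl_eq_zero
  intro x hx
  by_contra hfx
  apply hx
  have hcond : (n:ℝ) ≤ ‖x‖ ∧ ‖x‖ ≤ 2*(n:ℝ) := by
    by_contra hc; exact hfx (if_neg hc)
  have hre : |x.re| ≤ 2*(n:ℝ) := (Complex.abs_re_le_norm x).trans hcond.2
  have him : |x.im| ≤ 2*(n:ℝ) := (Complex.abs_im_le_norm x).trans hcond.2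
  rw [abs_le] at hre him
  have hmem : (⌊x.re⌋, ⌊x.im⌋) ∈ box n := by
    rw [box, Finset.mem_product, Finset.mem_Icc, Finset.mem_Icc]
    have l1 : (-(2 * (n:ℤ) + 3) : ℤ) ≤ ⌊x.re⌋ := by
      have : ((-(2 * (n:ℤ)) : ℤ) : ℝ) ≤ x.re := by push_cast; linarith [hre.1]
      have := Int.le_floor.2 this
      omega
    have l2 : ⌊x.re⌋ ≤ 2 * (n:ℤ) + 3 := by
      have : x.re ≤ (((2 * (n:ℤ) + 3 : ℤ) : ℝ)) := by push_cast; linarith [hre.2]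
      have := (Int.floor_mono this).trans_eq (Int.floor_intCast _)
      omega
    have l3 : (-(2 * (n:ℤ) + 3) : ℤ) ≤ ⌊x.im⌋ := by
      have : ((-(2 * (n:ℤ)) : ℤ) : ℝ) ≤ x.im := by push_cast; linarith [him.1]
      have := Int.le_floor.2 this
      omega
    have l4 : ⌊x.im⌋ ≤ 2 * (n:ℤ) + 3 := by
      have : x.im ≤ (((2 * (n:ℤ) + 3 : ℤ) : ℝ)) := by push_cast; linarith [him.2]
      have := (Int.floor_mono this).trans_eq (Int.floor_intCast _)
      omega
    exact ⟨⟨l1, l2⟩, ⟨l3, l4⟩⟩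
  exact Set.mem_biUnion hmem (mem_Q.2 ⟨rfl, rfl⟩)

lemma inv_sq_diff {ν u v : ℝ} (hν : 0 < ν) (hu : ν ≤ u) (hv : ν ≤ v)
    (huv : u + v ≤ 4 * ν) (hd : |u - v| ≤ 2) :
    |(u ^ 2)⁻¹ - (v ^ 2)⁻¹| ≤ 8 / ν ^ 3 := by
  have hu0 : 0 < u := hν.trans_le hu
  have hv0 : 0 < v := hν.trans_le hv
  have h1 : (u ^ 2)⁻¹ - (v ^ 2)⁻¹ = (v ^ 2 - u ^ 2) / (u ^ 2 * v ^ 2) := by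
    field_simp
  rw [h1, abs_div, abs_of_pos (mul_pos (pow_pos hu0 2) (pow_pos hv0 2))]
  have hnum : |v ^ 2 - u ^ 2| ≤ 8 * ν := by
    have hvu : v ^ 2 - u ^ 2 = (v - u) * (v + u) := by ring
    rw [hvu, abs_mul, abs_sub_comm v u, abs_of_nonneg (show (0:ℝ) ≤ v + u by linarith)]
    calc |u - v| * (v + u) ≤ 2 * (4 * ν) := by
          apply mul_le_mul hd (by linarith) (by linarith) (by norm_num)
      _ = 8 * ν := by ring
  have h2u : ν ^ 2 ≤ u ^ 2 := by nlinarith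
  have h2v : ν ^ 2 ≤ v ^ 2 := by nlinarith
  have hden : ν ^ 4 ≤ u ^ 2 * v ^ 2 := by
    calc ν ^ 4 = ν ^ 2 * ν ^ 2 := by ring
      _ ≤ u ^ 2 * v ^ 2 := mul_le_mul h2u h2v (by positivity) (by positivity)
  calc |v ^ 2 - u ^ 2| / (u ^ 2 * v ^ 2) ≤ (8 * ν) / ν ^ 4 :=
        div_le_div₀ (by positivity) hnum (by positivity) hden
    _ = 8 / ν ^ 3 := by field_simp

def bad (n : ℕ) (k : ℤ × ℤ) : Prop :=
  ((n:ℝ) - 3 ≤ A k ∧ A k ≤ (n:ℝ) + 3) ∨ (2*(n:ℝ) - 3 ≤ A k ∧ A k ≤ 2*(n:ℝ) + 3)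

lemma esq {n : ℕ} (hn : 8 ≤ n) (k : ℤ × ℤ) :
    |g n k - ∫ x in Q k, fA (n:ℝ) (2*(n:ℝ)) x| ≤
      (if bad n k then 2 / (n:ℝ)^2 else 8 / (n:ℝ)^3) := by
  have hν : (8:ℝ) ≤ (n:ℝ) := by exact_mod_cast hn
  have hν0 : (0:ℝ) < n := by linarith
  have hA0 : 0 ≤ A k := norm_nonneg _
  have hQfin : volume (Q k) < ⊤ := by rw [volume_Q]; exact ENNReal.one_lt_top
  have hmeas : AEStronglyMeasurable (fA (n:ℝ) (2*(n:ℝ))) (volume.restrict (Q k)) :=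
    (measurable_fA _ _).aestronglyMeasurable.restrict
  split_ifs with hbad
  · -- bad squares: crude bound
    have hg : |g n k| ≤ ((n:ℝ)^2)⁻¹ := by
      unfold g; split_ifs with h
      · rw [abs_of_nonneg (by positivity)]
        exact inv_anti₀ (by positivity) (by nlinarith [h.1])
      · rw [abs_zero]; positivity
    have hI : |∫ x in Q k, fA (n:ℝ) (2*(n:ℝ)) x| ≤ ((n:ℝ)^2)⁻¹ := by
      have := norm_setIntegral_le_of_norm_le_const (f := fA (n:ℝ) (2*(n:ℝ))) (C := ((n:ℝ)^2)⁻¹) hQfin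
        (fun x _ => by
          rw [Real.norm_eq_abs, abs_of_nonneg (fA_nonneg _ _ _)]
          exact fA_le hν0 x)
      rw [Measure.real, volume_Q] at this
      simpa using this
    calc |g n k - ∫ x in Q k, fA (n:ℝ) (2*(n:ℝ)) x|
        ≤ |g n k| + |∫ x in Q k, fA (n:ℝ) (2*(n:ℝ)) x| := abs_sub _ _
      _ ≤ ((n:ℝ)^2)⁻¹ + ((n:ℝ)^2)⁻¹ := add_le_add hg hI
      _ = 2 / (n:ℝ)^2 := by rw [div_eq_mul_inv]; ring
  · unfold bad at hbad
    push_neg at hbad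
    by_cases h1 : A k < (n:ℝ) - 3
    · -- inner dead
      have hg : g n k = 0 := if_neg (by rintro ⟨h, -⟩; linarith)
      have hI : ∫ x in Q k, fA (n:ℝ) (2*(n:ℝ)) x = 0 := by
        apply setIntegral_eq_zero_of_forall_eq_zero
        intro x hx
        have := abs_near hx
        rw [abs_le] at this
        exact if_neg (by rintro ⟨h, -⟩; linarith)
      rw [hg, hI, sub_zero, abs_zero]; positivity
    by_cases h2 : 2*(n:ℝ) + 3 < A k
    · -- outer dead
      have hg : g n k = 0 := if_neg (by rintro ⟨-, h⟩; linarith)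
      have hI : ∫ x in Q k, fA (n:ℝ) (2*(n:ℝ)) x = 0 := by
        apply setIntegral_eq_zero_of_forall_eq_zero
        intro x hx
        have := abs_near hx
        rw [abs_le] at this
        exact if_neg (by rintro ⟨-, h⟩; linarith)
      rw [hg, hI, sub_zero, abs_zero]; positivity
    · -- good squares
      push_neg at h1 h2
      have hgood1 : (n:ℝ) + 3 < A k := hbad.1 h1
      have hgood2 : A k < 2*(n:ℝ) - 3 := by
        by_contra hc
        push_neg at hc
        exact absurd (hbad.2 hc) (not_lt.2 h2)
      have hg : g n k = (A k ^ 2)⁻¹ := if_pos ⟨by linarith, by linarith⟩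
      have hconst : g n k = ∫ _x in Q k, (A k ^ 2)⁻¹ := by
        rw [setIntegral_const, Measure.real, volume_Q, hg]; simp
      rw [hconst, ← integral_sub (integrableOn_const (C := (A k ^ 2)⁻¹) hQfin.ne)
        ((integrable_fA hν0).integrableOn)]
      have hbd : ∀ x ∈ Q k,
          ‖(A k ^ 2)⁻¹ - fA (n:ℝ) (2*(n:ℝ)) x‖ ≤ 8 / (n:ℝ)^3 := by
        intro x hx
        have hnear := abs_near hx
        rw [abs_le] at hnear
        have hx1 : (n:ℝ) ≤ ‖x‖ := by linarith
        have hx2 : ‖x‖ ≤ 2*(n:ℝ) := by linarith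
        have hfx : fA (n:ℝ) (2*(n:ℝ)) x = (‖x‖ ^ 2)⁻¹ := if_pos ⟨hx1, hx2⟩
        rw [hfx, Real.norm_eq_abs]
        apply inv_sq_diff hν0 (by linarith) hx1 (by linarith)
        rw [abs_sub_comm, abs_le]; constructor <;> linarith
      have := norm_setIntegral_le_of_norm_le_const (C := 8 / (n:ℝ)^3) hQfin hbd
      rw [Measure.real, volume_Q] at this
      simpa using this

lemma bad_card {n : ℕ} (hn : 8 ≤ n) :
    (((box n).filter (fun k => bad n k)).card : ℝ) ≤ 60 * π * n := by
  have hν : (8:ℝ) ≤ (n:ℝ) := by exact_mod_cast hn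
  set T := (box n).filter (fun k => bad n k) with hT
  have hsub : ∀ k ∈ T, Q k ⊆
      ({x : ℂ | (n:ℝ)-5 ≤ ‖x‖ ∧ ‖x‖ ≤ (n:ℝ)+5} ∪
       {x : ℂ | 2*(n:ℝ)-5 ≤ ‖x‖ ∧ ‖x‖ ≤ 2*(n:ℝ)+5}) := by
    intro k hk x hx
    have hb := (Finset.mem_filter.1 hk).2
    have hnear := abs_near hx
    rw [abs_le] at hnear
    rcases hb with ⟨h1, h2⟩ | ⟨h1, h2⟩
    · exact Or.inl ⟨by linarith, by linarith⟩
    · exact Or.inr ⟨by linarith, by linarith⟩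
  have h1 : (T.card : ℝ≥0∞) ≤ ENNReal.ofReal (60 * π * (n:ℝ)) := by
    refine (count_le hsub).trans ?_
    refine (measure_union_le _ _).trans ?_
    have v1 := vol_ann (c := (n:ℝ)-5) (d := (n:ℝ)+5) (by linarith) (by linarith)
    have v2 := vol_ann (c := 2*(n:ℝ)-5) (d := 2*(n:ℝ)+5) (by linarith) (by linarith)
    refine (add_le_add v1 v2).trans ?_
    rw [← ENNReal.ofReal_add (by nlinarith [Real.pi_pos]) (by nlinarith [Real.pi_pos])]
    apply ENNReal.ofReal_le_ofReal
    nlinarith [Real.pi_pos]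
  have h2 := ENNReal.toReal_mono ENNReal.ofReal_ne_top h1
  rw [ENNReal.toReal_ofReal (by positivity)] at h2
  simpa using h2

lemma key {n : ℕ} (hn : 8 ≤ n) :
    |(∑ k ∈ box n, g n k) - 2 * π * Real.log 2| ≤ 1500 / n := by
  have hν : (8:ℝ) ≤ (n:ℝ) := by exact_mod_cast hn
  have hν0 : (0:ℝ) < n := by linarith
  have hI : (2:ℝ) * π * Real.log 2 = ∫ x : ℂ, fA (n:ℝ) (2*(n:ℝ)) x := by
    rw [integral_fA hν0 (by linarith), show 2*(n:ℝ)/(n:ℝ) = 2 by field_simp]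
  rw [hI, decomp (by omega), ← Finset.sum_sub_distrib]
  refine (Finset.abs_sum_le_sum_abs _ _).trans ?_
  have hstep : ∑ k ∈ box n, |g n k - ∫ x in Q k, fA (n:ℝ) (2*(n:ℝ)) x|
      ≤ ∑ k ∈ box n, ((if bad n k then 2/(n:ℝ)^2 else 0) + 8/(n:ℝ)^3) := by
    apply Finset.sum_le_sum
    intro k _
    refine (esq hn k).trans ?_
    split_ifs with hb
    · simp only [le_add_iff_nonneg_right]; positivity
    · simp only [zero_add]; exact le_refl _
  refine hstep.trans ?_
  rw [Finset.sum_add_distrib, ← Finset.sum_filter, Finset.sum_const, Finset.sum_const,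
    nsmul_eq_mul, nsmul_eq_mul]
  have hcard : ((box n).card : ℝ) = (4*(n:ℝ)+7) * (4*(n:ℝ)+7) := by
    rw [card_box]; push_cast; ring
  rw [hcard]
  have hbc := bad_card hn
  calc (((box n).filter (fun k => bad n k)).card : ℝ) * (2/(n:ℝ)^2)
        + (4*(n:ℝ)+7) * (4*(n:ℝ)+7) * (8/(n:ℝ)^3)
      ≤ (60 * π * (n:ℝ)) * (2/(n:ℝ)^2) + (11*(n:ℝ)) * (11*(n:ℝ)) * (8/(n:ℝ)^3) := by
        gcongr <;> linarith
    _ = 120 * π / (n:ℝ) + 968 / (n:ℝ) := by field_simp; ring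
    _ ≤ 480 / (n:ℝ) + 968 / (n:ℝ) := by
        gcongr
        · linarith [Real.pi_le_four]
    _ ≤ 1500 / (n:ℝ) := by rw [← add_div]; gcongr <;> norm_num

lemma A_eq_nrm2 (p : ℤ × ℤ) : A p = nrm2 ((piFinTwoEquiv (fun _ => ℤ)).symm p) := by
  simp only [A, cpt, Complex.norm_def, Complex.normSq_mk, nrm2, piFinTwoEquiv_symm_apply]
  norm_num
  ring_nf

lemma abs_fst_le_A (p : ℤ × ℤ) : |(p.1 : ℝ)| ≤ A p := Complex.abs_re_le_norm (cpt p)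

lemma abs_snd_le_A (p : ℤ × ℤ) : |(p.2 : ℝ)| ≤ A p := Complex.abs_im_le_norm (cpt p)

lemma latticeSum_eq {n : ℕ} (hn : 1 ≤ n) :
    (∑' k : Fin 2 → ℤ,
        if k ≠ 0 ∧ (n : ℝ) ≤ nrm2 k ∧ nrm2 k ≤ 2 * n then 1 / nrm2 k ^ 2 else 0)
      = ∑ k ∈ box n, g n k := by
  have hν0 : (0:ℝ) < n := by exact_mod_cast hn
  rw [← Equiv.tsum_eq (piFinTwoEquiv (fun _ => ℤ)).symm]
  have hterm : ∀ p : ℤ × ℤ,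
      (if (piFinTwoEquiv (fun _ => ℤ)).symm p ≠ 0 ∧
          (n : ℝ) ≤ nrm2 ((piFinTwoEquiv (fun _ => ℤ)).symm p) ∧
          nrm2 ((piFinTwoEquiv (fun _ => ℤ)).symm p) ≤ 2 * n
        then 1 / nrm2 ((piFinTwoEquiv (fun _ => ℤ)).symm p) ^ 2 else 0) = g n p := by
    intro p
    rw [← A_eq_nrm2]
    by_cases hp : p = 0
    · subst hp
      have hA : A 0 = 0 := by
        simp [A, cpt, Complex.norm_def, Complex.normSq_mk]
      rw [g, hA, if_neg (fun hcc => by have := hcc.2.1; linarith),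
        if_neg (fun hcc => by have := hcc.1; linarith)]
    · have hne : (piFinTwoEquiv (fun _ => ℤ)).symm p ≠ 0 := by
        simp only [ne_eq, Equiv.symm_apply_eq]
        exact hp
      rw [g]
      by_cases hc : (n : ℝ) ≤ A p ∧ A p ≤ 2 * n
      · rw [if_pos ⟨hne, hc⟩, if_pos hc, one_div]
      · rw [if_neg (by rintro ⟨-, h⟩; exact hc h), if_neg hc]
  simp_rw [hterm]
  apply tsum_eq_sum
  intro p hp
  rw [box, Finset.mem_product, Finset.mem_Icc, Finset.mem_Icc] at hp
  push_neg at hp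
  have hbig : (2*(n:ℝ)+3) < A p := by
    have habs : 2*(n:ℤ)+3 < |p.1| ∨ 2*(n:ℤ)+3 < |p.2| := by
      by_cases hc1 : -(2*(n:ℤ)+3) ≤ p.1 ∧ p.1 ≤ 2*(n:ℤ)+3
      · right
        rcases le_or_gt (-(2*(n:ℤ)+3)) p.2 with h3 | h3
        · exact lt_abs.2 (Or.inl (hp hc1 h3))
        · exact lt_abs.2 (Or.inr (by linarith))
      · left
        push_neg at hc1
        rcases le_or_gt (-(2*(n:ℤ)+3)) p.1 with h3 | h3
        · exact lt_abs.2 (Or.inl (hc1 h3))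
        · exact lt_abs.2 (Or.inr (by linarith))
    rcases habs with h | h
    · refine lt_of_lt_of_le ?_ (abs_fst_le_A p)
      have h5 := (Int.cast_lt (R := ℝ)).2 h
      rw [Int.cast_abs] at h5
      push_cast at h5 ⊢
      linarith
    · refine lt_of_lt_of_le ?_ (abs_snd_le_A p)
      have h5 := (Int.cast_lt (R := ℝ)).2 h
      rw [Int.cast_abs] at h5
      push_cast at h5 ⊢
      linarith
  exact if_neg (by rintro ⟨-, h⟩; linarith)

end Helic


/-- Convergence of the mean helicity: with `α + β = 6` the helicity reduces to
`H^n = -2ρ ζ^n_{H,2}/(C₁C₂)` with `ζ^n_{H,2} = Σ_{k ∈ ℤ²\{0}, n ≤ |k| ≤ 2n} |k|^{-2}`,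
and `H^n → H = -4πρ log 2/(C₁C₂)` with `|H^n - H| ≤ C/n`. -/
theorem helicity_convergence (ρ C₁ C₂ : ℝ) (hC₁ : 0 < C₁) (hC₂ : 0 < C₂)
    (hρ : -1 ≤ ρ ∧ ρ ≤ 1) :
    ∃ C : ℝ, ∀ n : ℕ, 1 ≤ n →
      |(-2 * ρ / (C₁ * C₂)) *
          (∑' k : Fin 2 → ℤ,
            if k ≠ 0 ∧ (n : ℝ) ≤ nrm2 k ∧ nrm2 k ≤ 2 * n then 1 / nrm2 k ^ 2 else 0)
        - (-4 * Real.pi * ρ * Real.log 2 / (C₁ * C₂))| ≤ C / n := by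

  have hCC : (0:ℝ) < C₁ * C₂ := mul_pos hC₁ hC₂
  refine ⟨2 / (C₁ * C₂) * 1500 + ∑ m ∈ Finset.range 8, ((m : ℝ) *
      |(-2 * ρ / (C₁ * C₂)) *
          (∑' k : Fin 2 → ℤ,
            if k ≠ 0 ∧ (m : ℝ) ≤ nrm2 k ∧ nrm2 k ≤ 2 * m then 1 / nrm2 k ^ 2 else 0)
        - (-4 * Real.pi * ρ * Real.log 2 / (C₁ * C₂))|), ?_⟩
  intro n hn
  have hn0 : (0:ℝ) < n := by exact_mod_cast hn
  have hsumnn : (0:ℝ) ≤ ∑ m ∈ Finset.range 8, ((m : ℝ) *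
      |(-2 * ρ / (C₁ * C₂)) *
          (∑' k : Fin 2 → ℤ,
            if k ≠ 0 ∧ (m : ℝ) ≤ nrm2 k ∧ nrm2 k ≤ 2 * m then 1 / nrm2 k ^ 2 else 0)
        - (-4 * Real.pi * ρ * Real.log 2 / (C₁ * C₂))|) :=
    Finset.sum_nonneg fun m _ => mul_nonneg (Nat.cast_nonneg m) (abs_nonneg _)
  by_cases hbig : 8 ≤ n
  · have hkey := key hbig
    rw [latticeSum_eq (by omega),
      show (-2 * ρ / (C₁ * C₂)) * (∑ k ∈ box n, g n k)
          - (-4 * Real.pi * ρ * Real.log 2 / (C₁ * C₂))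
        = (-2 * ρ / (C₁ * C₂)) * ((∑ k ∈ box n, g n k) - 2 * π * Real.log 2)
        from by ring, abs_mul]
    have hcoef : |(-2 * ρ / (C₁ * C₂))| ≤ 2 / (C₁ * C₂) := by
      rw [abs_div, abs_of_pos hCC]
      have h2 : |(-2 * ρ)| ≤ 2 := by
        rw [abs_mul]
        have hρ' : |ρ| ≤ 1 := abs_le.2 hρ
        calc |(-2:ℝ)| * |ρ| ≤ 2 * 1 :=
              mul_le_mul (by norm_num) hρ' (abs_nonneg _) (by norm_num)
          _ = 2 := by ring
      gcongr
    calc |(-2 * ρ / (C₁ * C₂))| *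
          |(∑ k ∈ box n, g n k) - 2 * π * Real.log 2|
        ≤ (2 / (C₁ * C₂)) * (1500 / n) :=
          mul_le_mul hcoef hkey (abs_nonneg _) (by positivity)
      _ = (2 / (C₁ * C₂) * 1500) / n := by ring
      _ ≤ _ := by gcongr; linarith
  · push_neg at hbig
    have hmem : n ∈ Finset.range 8 := Finset.mem_range.2 hbig
    have h1 := Finset.single_le_sum (f := fun m : ℕ => ((m : ℝ) *
      |(-2 * ρ / (C₁ * C₂)) *
          (∑' k : Fin 2 → ℤ,
            if k ≠ 0 ∧ (m : ℝ) ≤ nrm2 k ∧ nrm2 k ≤ 2 * m then 1 / nrm2 k ^ 2 else 0)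
        - (-4 * Real.pi * ρ * Real.log 2 / (C₁ * C₂))|))
      (fun m _ => mul_nonneg (Nat.cast_nonneg m) (abs_nonneg _)) hmem
    rw [le_div_iff₀ hn0]
    calc |(-2 * ρ / (C₁ * C₂)) *
          (∑' k : Fin 2 → ℤ,
            if k ≠ 0 ∧ (n : ℝ) ≤ nrm2 k ∧ nrm2 k ≤ 2 * n then 1 / nrm2 k ^ 2 else 0)
        - (-4 * Real.pi * ρ * Real.log 2 / (C₁ * C₂))| * n
        = (n : ℝ) * |(-2 * ρ / (C₁ * C₂)) *
          (∑' k : Fin 2 → ℤ,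
            if k ≠ 0 ∧ (n : ℝ) ≤ nrm2 k ∧ nrm2 k ≤ 2 * n then 1 / nrm2 k ^ 2 else 0)
        - (-4 * Real.pi * ρ * Real.log 2 / (C₁ * C₂))| := by ring
      _ ≤ _ := h1
      _ ≤ _ := le_add_of_nonneg_left (by positivity)
end
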